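/- arXiv:1105.0457 — 3 statements merged into one kernel-verified Lean document; each statement's English description precedes it below -/
import Mathlib

section
/- Let M be an ergodic time-reversible Markov chain on a finite state space Ω with transition matrix P and stationary distribution π, with eigenvalues 1 = λ_0 > λ_1 ≥ ... ≥ λ_{N−1} ≥ −1 where N = |Ω|. For each x ∈ Ω fix a closed walk σ_x from x to x of odd length in the underlying graph 𝒢 of the chain, let Σ = {σ_x : x ∈ Ω}, and let η = η(Σ) = max_{e∈Γ} (1/Q(e)) · ∑_{x∈Ω, e∈σ_x} |σ_x|·π(x). Then (1 + λ_{N−1})^{-1} ≤ η/2. -/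
attribute [local instance] Classical.propDecidable

/-- The walk (given as its list of vertices) `p` uses the undirected edge `{a,b}`:
`a, b` occur consecutively in `p` in either order. -/
def WalkUses {Ω : Type*} (p : List Ω) (a b : Ω) : Prop :=
  (∃ l₁ l₂, p = l₁ ++ a :: b :: l₂) ∨ (∃ l₁ l₂, p = l₁ ++ b :: a :: l₂)

namespace WalkAux
open List
variable {α : Type*}




/-- edge pairs of a list -/
def pairs (l : List α) : List (α × α) := l.zip l.tail

@[simp] lemma pairs_nil : pairs ([] : List α) = [] := rfl
@[simp] lemma pairs_single (a : α) : pairs [a] = [] := rfl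
@[simp] lemma pairs_cons_cons (a b : α) (l : List α) :
    pairs (a :: b :: l) = (a, b) :: pairs (b :: l) := rfl

lemma mem_pairs_iff_infix {l : List α} {a b : α} :
    (a, b) ∈ pairs l ↔ [a, b] <:+: l := by
  induction l with
  | nil => simp [pairs]
  | cons h t ih =>
    cases t with
    | nil =>
      simp only [pairs_single, List.not_mem_nil, false_iff]
      rintro ⟨s, t, hst⟩
      have := congrArg List.length hst
      simp at this; omega
    | cons h2 t2 =>
      rw [pairs_cons_cons, List.mem_cons, ih]
      constructor
      · rintro (heq | hin)
        · obtain ⟨rfl, rfl⟩ := Prod.mk.injEq .. ▸ heq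
          exact ⟨[], t2, rfl⟩
        · obtain ⟨s, t, hst⟩ := hin
          exact ⟨h :: s, t, by simp [← hst]⟩
      · intro hinf
        rcases List.infix_cons_iff.1 hinf with hpre | hin
        · obtain ⟨s, hs⟩ := hpre
          simp only [List.cons_append, List.nil_append, List.cons.injEq] at hs
          exact Or.inl (by rw [hs.1, hs.2.1])
        · exact Or.inr hin

lemma map_fst_pairs (l : List α) : (pairs l).map Prod.fst = l.dropLast := by
  induction l with
  | nil => rfl
  | cons h t ih =>
    cases t with
    | nil => rfl
    | cons h2 t2 => simp_all [pairs_cons_cons, List.dropLast_cons₂]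

lemma map_snd_pairs (l : List α) : (pairs l).map Prod.snd = l.tail := by
  induction l with
  | nil => rfl
  | cons h t ih =>
    cases t with
    | nil => rfl
    | cons h2 t2 =>
      simp only [pairs_cons_cons, List.map_cons, List.tail_cons]
      rw [ih]
      cases t2 <;> rfl

lemma chain'_iff_pairs {R : α → α → Prop} {l : List α} :
    l.Chain' R ↔ ∀ a b, (a, b) ∈ pairs l → R a b := by
  induction l with
  | nil => simp [List.Chain']
  | cons h t ih =>
    cases t with
    | nil => simp [List.Chain']
    | cons h2 t2 =>
      unfold List.Chain' at ih ⊢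
      rw [List.isChain_cons_cons, ih, pairs_cons_cons]
      constructor
      · rintro ⟨hR, hrest⟩ a b hab
        rcases List.mem_cons.1 hab with heq | hm
        · obtain ⟨rfl, rfl⟩ := Prod.mk.injEq .. ▸ heq; exact hR
        · exact hrest a b hm
      · intro H
        exact ⟨H h h2 List.mem_cons_self, fun a b hm => H a b (List.mem_cons_of_mem _ hm)⟩

lemma fst_mem_dropLast_of_mem_pairs {l : List α} {a b : α} (h : (a, b) ∈ pairs l) :
    a ∈ l.dropLast := by
  rw [← map_fst_pairs]; exact List.mem_map_of_mem h

lemma snd_mem_tail_of_mem_pairs {l : List α} {a b : α} (h : (a, b) ∈ pairs l) :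
    b ∈ l.tail := by
  rw [← map_snd_pairs]; exact List.mem_map_of_mem h


lemma infix_cons_of_infix {l t : List α} (hd : α) (h : l <:+: t) : l <:+: hd :: t := by
  obtain ⟨s, t2, hst⟩ := h; exact ⟨hd :: s, t2, by simp [← hst]⟩

lemma infix_pair_append {l₁ l₂ : List α} {a b : α} (h : [a, b] <:+: l₁ ++ l₂) :
    [a, b] <:+: l₁ ∨ [a, b] <:+: l₂ ∨ (l₁.getLast? = some a ∧ l₂.head? = some b) := by
  induction l₁ with
  | nil => exact Or.inr (Or.inl (by simpa using h))
  | cons hd t ih =>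
    rw [List.cons_append, List.infix_cons_iff] at h
    rcases h with hpre | hin
    · obtain ⟨s, hs⟩ := hpre
      simp only [List.cons_append, List.nil_append, List.cons.injEq] at hs
      obtain ⟨rfl, hs2⟩ := hs
      cases t with
      | nil =>
        refine Or.inr (Or.inr ⟨rfl, ?_⟩)
        simp only [List.nil_append] at hs2
        rw [← hs2]; rfl
      | cons t0 t' =>
        simp only [List.cons_append, List.cons.injEq] at hs2
        exact Or.inl (List.IsPrefix.isInfix ⟨t', by rw [hs2.1]; rfl⟩)
    · rcases ih hin with h1 | h2 | h3
      · exact Or.inl (infix_cons_of_infix hd h1)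
      · exact Or.inr (Or.inl h2)
      · refine Or.inr (Or.inr ⟨?_, h3.2⟩)
        cases t with
        | nil => simp at h3
        | cons t0 t' => rw [List.getLast?_cons_cons]; exact h3.1

lemma sublist_pair_split {l : List α} {a : α} (h : [a, a] <+ l) :
    ∃ l₁ l₂ l₃, l = l₁ ++ a :: l₂ ++ a :: l₃ := by
  induction l with
  | nil => cases h
  | cons hd t ih =>
    cases h with
    | cons _ hsub =>
      obtain ⟨l₁, l₂, l₃, rfl⟩ := ih hsub
      exact ⟨hd :: l₁, l₂, l₃, rfl⟩
    | cons_cons _ hsub =>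
      have : a ∈ t := List.singleton_sublist.1 hsub
      obtain ⟨s, t', rfl⟩ := List.mem_iff_append.1 this
      exact ⟨[], s, t', rfl⟩

lemma exists_first_hit {l : List α} {S : α → Prop} (h : ∃ v ∈ l, S v) :
    ∃ l₁ v l₂, l = l₁ ++ v :: l₂ ∧ S v ∧ ∀ y ∈ l₁, ¬ S y := by
  classical
  induction l with
  | nil => simp at h
  | cons hd t ih =>
    by_cases hS : S hd
    · exact ⟨[], hd, t, rfl, hS, by simp⟩
    · obtain ⟨v, hv, hSv⟩ := h
      rcases List.mem_cons.1 hv with rfl | hvt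
      · exact absurd hSv hS
      · obtain ⟨l₁, v', l₂, rfl, h1, h2⟩ := ih ⟨v, hvt, hSv⟩
        exact ⟨hd :: l₁, v', l₂, rfl, h1, by
          intro y hy
          rcases List.mem_cons.1 hy with rfl | hy'
          · exact hS
          · exact h2 y hy'⟩


lemma eq_cons_of_head? {t : List α} {v : α} (ht : t.head? = some v) : t = v :: t.tail := by
  cases t with
  | nil => simp at ht
  | cons h r => simp at ht; rw [ht]; rfl

lemma pairs_glue : ∀ {s : List α} {t : List α} {v : α}, s.getLast? = some v →
    t.head? = some v → pairs (s ++ t.tail) = pairs s ++ pairs t := by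
  intro s
  induction s with
  | nil => intro t v hs ht; simp at hs
  | cons h s' ih =>
    intro t v hs ht
    cases s' with
    | nil =>
      simp only [getLast?_singleton, Option.some.injEq] at hs
      subst hs
      conv_rhs => rw [eq_cons_of_head? ht]
      simp [pairs]
    | cons h2 s'' =>
      have hs' : (h2 :: s'').getLast? = some v := by
        rw [getLast?_cons_cons] at hs; exact hs
      calc pairs ((h :: h2 :: s'') ++ t.tail)
          = (h, h2) :: pairs ((h2 :: s'') ++ t.tail) := rfl
        _ = (h, h2) :: (pairs (h2 :: s'') ++ pairs t) := by rw [ih hs' ht]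
        _ = pairs (h :: h2 :: s'') ++ pairs t := rfl

lemma glue_head? {s t : List α} (hs : s ≠ []) : (s ++ t.tail).head? = s.head? := by
  cases s with
  | nil => exact absurd rfl hs
  | cons h r => rfl

lemma glue_getLast? {s t : List α} {v : α} (hs : s.getLast? = some v)
    (ht : t.head? = some v) : (s ++ t.tail).getLast? = t.getLast? := by
  cases htt : t.tail with
  | nil =>
    rw [eq_cons_of_head? ht, htt]
    simpa using hs
  | cons h r =>
    rw [List.getLast?_append_of_ne_nil _ (List.cons_ne_nil h r)]
    conv_rhs => rw [eq_cons_of_head? ht]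
    rw [htt, List.getLast?_cons_cons]

lemma glue_length {s t : List α} {v : α} (ht : t.head? = some v) :
    (s ++ t.tail).length = s.length + t.length - 1 := by
  rw [List.length_append, List.length_tail]
  have : t.length ≥ 1 := by rw [eq_cons_of_head? ht]; simp
  omega

lemma glue_chain' {R : α → α → Prop} {s t : List α} {v : α} (hs : s.getLast? = some v)
    (ht : t.head? = some v) (hcs : s.Chain' R) (hct : t.Chain' R) :
    (s ++ t.tail).Chain' R := by
  unfold List.Chain' at *
  rw [List.isChain_append]
  refine ⟨hcs, hct.tail, ?_⟩
  intro x hx y hy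
  rw [hs, Option.mem_some_iff] at hx
  subst hx
  have := eq_cons_of_head? ht
  rw [this, List.isChain_cons] at hct
  exact hct.1 y hy

lemma eq_dropLast_append {l : List α} {v : α} (h : l.getLast? = some v) :
    l = l.dropLast ++ [v] := by
  have hne : l ≠ [] := by rintro rfl; simp at h
  have h2 : l.getLast hne = v := by
    rw [List.getLast?_eq_getLast hne] at h
    exact Option.some_injective _ h
  conv_lhs => rw [← List.dropLast_append_getLast hne, h2]

lemma bypass {R : α → α → Prop} :
    ∀ (n : ℕ) {W : List α} {x v : α}, W.length ≤ n →
    W.Chain' R → W.head? = some x → W.getLast? = some v →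
    ∃ p : List α, p.Nodup ∧ p.Chain' R ∧ p.head? = some x ∧ p.getLast? = some v ∧
      p.length ≤ W.length ∧ (∀ a b, [a, b] <:+: p → [a, b] <:+: W) ∧ (∀ y ∈ p, y ∈ W) := by
  intro n
  induction n with
  | zero =>
    intro W x v hlen _ hh _
    rw [List.length_eq_zero_iff.1 (Nat.le_zero.1 hlen)] at hh
    simp at hh
  | succ n ih =>
    intro W x v hlen hc hh hl
    by_cases hnd : W.Nodup
    · exact ⟨W, hnd, hc, hh, hl, le_refl _, fun _ _ h => h, fun _ h => h⟩
    · obtain ⟨a, hdup⟩ := (List.exists_duplicate_iff_not_nodup.2 hnd)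
      obtain ⟨l₁, l₂, l₃, rfl⟩ := sublist_pair_split (List.duplicate_iff_sublist.1 hdup)
      -- W = (l₁ ++ a :: l₂) ++ (a :: l₃)
      have hlen' : (l₁ ++ a :: l₃).length ≤ n := by simp at hlen ⊢; omega
      have hsplit1 := List.isChain_append.1 hc
      have hsplit2 := List.isChain_append.1 hsplit1.1
      have hcW' : (l₁ ++ a :: l₃).Chain' R := by
        refine List.isChain_append.2 ⟨hsplit2.1, hsplit1.2.1, ?_⟩
        intro p hp q hq
        simp only [List.head?_cons, Option.mem_some_iff] at hq
        subst hq
        exact hsplit2.2.2 p hp a (by simp)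
      have hhW' : (l₁ ++ a :: l₃).head? = some x := by
        cases l₁ with
        | nil => simpa using hh
        | cons h t => simpa using hh
      have hlW' : (l₁ ++ a :: l₃).getLast? = some v := by
        rw [List.getLast?_append_of_ne_nil _ (List.cons_ne_nil a l₃)]
        rw [List.getLast?_append_of_ne_nil _ (List.cons_ne_nil a l₃)] at hl
        exact hl
      obtain ⟨p, h1, h2, h3, h4, h5, h6, h7⟩ := ih hlen' hcW' hhW' hlW'
      refine ⟨p, h1, h2, h3, h4, ?_, ?_, ?_⟩
      · calc p.length ≤ (l₁ ++ a :: l₃).length := h5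
          _ ≤ _ := by simp; omega
      · intro a' b' hinf
        rcases infix_pair_append (h6 a' b' hinf) with hi | hi | ⟨hj1, hj2⟩
        · exact hi.trans (((l₁.prefix_append (a :: l₂)).trans
            ((l₁ ++ a :: l₂).prefix_append (a :: l₃))).isInfix)
        · exact hi.trans ⟨l₁ ++ a :: l₂, [], by simp⟩
        · rcases (by simpa using hj2.symm : b' = a) with rfl
          refine ⟨l₁.dropLast, l₂ ++ b' :: l₃, ?_⟩
          conv_rhs => rw [eq_dropLast_append hj1]
          simp
      · intro y hy
        have := h7 y hy
        simp only [List.mem_append, List.mem_cons] at this ⊢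
        tauto

lemma chain'_of_pairs {R : α → α → Prop} {l : List α}
    (h : ∀ a b, (a, b) ∈ pairs l → R a b) : l.Chain' R := chain'_iff_pairs.2 h

lemma rotate_closed {R : α → α → Prop} {c : List α} {u v : α}
    (hh : c.head? = some u) (hl : c.getLast? = some u) (hc : c.Chain' R)
    (hnd : c.dropLast.Nodup) (hv : v ∈ c) :
    ∃ c₂ : List α, c₂.head? = some v ∧ c₂.getLast? = some v ∧ c₂.Chain' R ∧
      c₂.dropLast.Nodup ∧ c₂.length = c.length ∧
      (∀ a b, [a, b] <:+: c₂ → [a, b] <:+: c) ∧ (∀ y ∈ c₂, y ∈ c) := by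
  by_cases hvu : v = u
  · exact ⟨c, hvu ▸ hh, hvu ▸ hl, hc, hnd, rfl, fun _ _ h => h, fun _ h => h⟩
  have hceq : c = c.dropLast ++ [u] := eq_dropLast_append hl
  have hvD : v ∈ c.dropLast := by
    rcases List.mem_append.1 (hceq ▸ hv) with h | h
    · exact h
    · simp at h; exact absurd h hvu
  obtain ⟨D₁, D₂, hD⟩ := List.mem_iff_append.1 hvD
  have hD₁ne : D₁ ≠ [] := by
    rintro rfl
    simp only [List.nil_append] at hD
    have hch : c.head? = some v := by
      conv_lhs => rw [hceq, hD]
      rfl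
    rw [hch] at hh
    exact hvu (by simpa using hh)
  have hD₁h : D₁.head? = some u := by
    have : c.head? = D₁.head? := by
      conv_lhs => rw [hceq, hD]
      cases D₁ with
      | nil => exact absurd rfl hD₁ne
      | cons h t => rfl
    rw [← this, hh]
  obtain ⟨E, hE⟩ : ∃ E, D₁ = u :: E := ⟨D₁.tail, eq_cons_of_head? hD₁h⟩
  subst hE
  -- c = (u :: E) ++ (v :: D₂) ++ [u]
  have hceq2 : c = (u :: E) ++ ((v :: D₂) ++ [u]) := by
    rw [hceq, hD]; simp
  set A := (v :: D₂) ++ [u] with hA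
  set B := (u :: E) ++ [v] with hB
  have hAlast : A.getLast? = some u := by
    rw [hA, List.getLast?_append_of_ne_nil _ (by simp)]; rfl
  have hBhead : B.head? = some u := rfl
  have hAinf : A <:+: c := ⟨u :: E, [], by rw [hceq2]; simp⟩
  have hBpairs : ∀ a b, [a, b] <:+: B → [a, b] <:+: c := by
    intro a b hab
    rcases infix_pair_append hab with hi | hi | ⟨hj1, hj2⟩
    · exact hi.trans ⟨[], (v :: D₂) ++ [u], by rw [hceq2, hA]; simp⟩
    · obtain ⟨s, t, hst⟩ := hi
      have := congrArg List.length hst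
      simp at this; omega
    · rcases (by simpa using hj2.symm : b = v) with rfl
      refine ⟨(u :: E).dropLast, D₂ ++ [u], ?_⟩
      conv_rhs => rw [hceq2, eq_dropLast_append hj1]
      simp [hA]
  have hchA : A.Chain' R := hc.infix hAinf
  have hchB : B.Chain' R := chain'_of_pairs (fun a b hm =>
    chain'_iff_pairs.1 hc a b (mem_pairs_iff_infix.2 (hBpairs a b (mem_pairs_iff_infix.1 hm))))
  refine ⟨A ++ B.tail, ?_, ?_, ?_, ?_, ?_, ?_, ?_⟩
  · rw [glue_head? (by simp [hA])]; rfl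
  · rw [glue_getLast? hAlast hBhead, hB,
      List.getLast?_append_of_ne_nil _ (by simp : ([v] : List α) ≠ [])]; rfl
  · exact glue_chain' hAlast hBhead hchA hchB
  · have hceq3 : A ++ B.tail = (v :: (D₂ ++ u :: E)) ++ [v] := by
      rw [hA, hB]; simp
    rw [hceq3, List.dropLast_concat]
    have hperm : (v :: (D₂ ++ u :: E)) ~ c.dropLast := by
      rw [hD]
      calc v :: (D₂ ++ u :: E) ~ (v :: D₂) ++ (u :: E) := by simp
        _ ~ (u :: E) ++ (v :: D₂) := List.perm_append_comm
        _ = u :: E ++ v :: D₂ := by simp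
    exact hnd.perm hperm.symm
  · rw [glue_length hBhead, hceq2, hA, hB]
    simp only [List.length_append, List.length_cons, List.length_nil]
    omega
  · intro a b hab
    rw [← mem_pairs_iff_infix, pairs_glue hAlast hBhead, List.mem_append] at hab
    rcases hab with h | h
    · exact (mem_pairs_iff_infix.1 h).trans hAinf
    · exact hBpairs a b (mem_pairs_iff_infix.1 h)
  · intro y hy
    rcases List.mem_append.1 hy with h | h
    · exact hAinf.subset h
    · have hyB : y ∈ B := List.mem_of_mem_tail h
      rcases List.mem_append.1 (hB ▸ hyB) with h2 | h2
      · exact (List.IsPrefix.subset ⟨A, hceq2.symm⟩) h2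
      · rw [List.mem_singleton] at h2; subst h2; exact hv
lemma infix_pair_reverse {l : List α} {a b : α} (h : [a, b] <:+: l.reverse) :
    [b, a] <:+: l := by
  obtain ⟨s, t, hst⟩ := h
  refine ⟨t.reverse, s.reverse, ?_⟩
  have := congrArg List.reverse hst
  simp only [List.reverse_append, List.reverse_reverse] at this
  rw [← this]; simp

lemma mem_of_head? {l : List α} {v : α} (h : l.head? = some v) : v ∈ l := by
  rw [eq_cons_of_head? h]; exact List.mem_cons_self

lemma mem_of_getLast? {l : List α} {v : α} (h : l.getLast? = some v) : v ∈ l := by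
  rw [eq_dropLast_append h]; simp

theorem decomp {R : α → α → Prop} (hsym : ∀ a b, R a b → R b a) :
    ∀ (n : ℕ) (w : List α) (x : α), w.length ≤ n → w.Chain' R → w.head? = some x →
    w.getLast? = some x → Odd (w.length - 1) →
    ∃ (u : α) (p c : List α),
      p.head? = some x ∧ p.getLast? = some u ∧ p.Nodup ∧ p.Chain' R ∧
      c.head? = some u ∧ c.getLast? = some u ∧ c.Chain' R ∧ Odd (c.length - 1) ∧
      c.dropLast.Nodup ∧ (∀ v ∈ p.dropLast, v ∉ c) ∧
      (∀ a b, [a, b] <:+: p → ([a, b] <:+: w ∨ [b, a] <:+: w)) ∧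
      (∀ a b, [a, b] <:+: c → ([a, b] <:+: w ∨ [b, a] <:+: w)) ∧
      2 * (p.length - 1) + (c.length - 1) ≤ w.length - 1 := by
  intro n
  induction n with
  | zero =>
    intro w x hlen _ hh _ _
    rw [List.length_eq_zero_iff.1 (Nat.le_zero.1 hlen)] at hh
    simp at hh
  | succ n ih =>
    intro w x hlen hc hh hl hodd
    have hw : w = x :: w.tail := eq_cons_of_head? hh
    by_cases hnd : w.tail.Nodup
    · -- w is itself a simple odd cycle
      have htne : w.tail ≠ [] := by
        intro h0
        rw [hw, h0] at hodd
        simp [Nat.odd_iff] at hodd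
      have hlt : w.tail.getLast? = some x := by
        obtain ⟨h0, t0, ht0⟩ : ∃ h0 t0, w.tail = h0 :: t0 := by
          cases h' : w.tail with
          | nil => exact absurd h' htne
          | cons a b => exact ⟨a, b, rfl⟩
        rw [hw, ht0, List.getLast?_cons_cons] at hl
        rw [ht0]
        exact hl
      have hdl : w.dropLast = x :: w.tail.dropLast := by
        conv_lhs => rw [hw]
        cases h' : w.tail with
        | nil => exact absurd h' htne
        | cons hh tt => rw [List.dropLast_cons₂]
      have hxnot : x ∉ w.tail.dropLast := by
        intro hx
        have ht2 : w.tail = w.tail.dropLast ++ [x] := eq_dropLast_append hlt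
        have := List.nodup_append.1 (ht2 ▸ hnd)
        exact this.2.2 x hx x (List.mem_singleton_self x) rfl
      refine ⟨x, [x], w, rfl, rfl, List.nodup_singleton x, List.isChain_singleton x,
        hh, hl, hc, hodd, ?_, by simp, ?_, fun a b h => Or.inl h, by simp⟩
      · rw [hdl]
        exact List.Nodup.cons hxnot (hnd.sublist (List.dropLast_sublist _))
      · intro a b h
        obtain ⟨s, t, hst⟩ := h
        have := congrArg List.length hst
        simp at this; omega
    · obtain ⟨a, hdup⟩ := (List.exists_duplicate_iff_not_nodup.2 hnd)
      obtain ⟨t₁, t₂, t₃, hsplit⟩ := sublist_pair_split (List.duplicate_iff_sublist.1 hdup)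
      have hw2 : w = (x :: t₁) ++ ((a :: t₂) ++ (a :: t₃)) := by
        conv_lhs => rw [hw, hsplit]
        simp
      have hw3 : w = ((x :: t₁) ++ (a :: t₂)) ++ (a :: t₃) := by rw [hw2]; simp
      have hwlen : w.length = t₁.length + t₂.length + t₃.length + 3 := by
        rw [hw2]; simp; omega
      -- the inner closed walk m
      have hminf : ((a :: t₂) ++ [a]) <:+: w := ⟨x :: t₁, t₃, by rw [hw2]; simp⟩
      have hmlast : ((a :: t₂) ++ [a]).getLast? = some a := by
        rw [List.getLast?_append_of_ne_nil _ (by simp : ([a] : List α) ≠ [])]; rfl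
      have hwlast : w.getLast? = (a :: t₃).getLast? := by
        conv_lhs => rw [hw3]
        rw [List.getLast?_append_of_ne_nil _ (List.cons_ne_nil a t₃)]
      -- junction fact: the pair before the first `a`
      have hjunc : ∀ b', (x :: t₁).getLast? = some b' → [b', a] <:+: w := by
        intro b' hb'
        refine ⟨(x :: t₁).dropLast, t₂ ++ (a :: t₃), ?_⟩
        conv_rhs => rw [hw2, eq_dropLast_append hb']
        simp
      rcases Nat.even_or_odd (t₂.length + 1) with hd | hd
      · -- outer walk is odd
        have hodd' : Odd (((x :: t₁) ++ (a :: t₃)).length - 1) := by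
          simp only [List.length_append, List.length_cons]
          rw [hwlen] at hodd
          rcases hd with ⟨k, hk⟩
          rcases hodd with ⟨j, hj⟩
          refine ⟨j - k, by omega⟩
        have hlen' : ((x :: t₁) ++ (a :: t₃)).length ≤ n := by
          have := hwlen ▸ hlen
          simp only [List.length_append, List.length_cons]
          omega
        have hcsp := List.isChain_append.1 (hw2 ▸ hc)
        have hchain' : ((x :: t₁) ++ (a :: t₃)).Chain' R := by
          refine List.isChain_append.2 ⟨hcsp.1, hc.infix ⟨(x :: t₁) ++ (a :: t₂), [],
            by rw [hw3]; simp⟩, ?_⟩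
          intro p hp q hq
          simp only [List.head?_cons, Option.mem_some_iff] at hq
          subst hq
          exact hcsp.2.2 p hp a (by simp)
        have hhead' : ((x :: t₁) ++ (a :: t₃)).head? = some x := rfl
        have hlast' : ((x :: t₁) ++ (a :: t₃)).getLast? = some x := by
          rw [List.getLast?_append_of_ne_nil _ (List.cons_ne_nil a t₃), ← hwlast]
          exact hl
        obtain ⟨u, p, c, H1, H2, H3, H4, H5, H6, H7, H8, H9, H10, H11, H12, H13⟩ :=
          ih _ x hlen' hchain' hhead' hlast' hodd'
        have htrans : ∀ a' b', [a', b'] <:+: ((x :: t₁) ++ (a :: t₃)) →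
            ([a', b'] <:+: w ∨ [b', a'] <:+: w) := by
          intro a' b' hab
          rcases infix_pair_append hab with hi | hi | ⟨hj1, hj2⟩
          · exact Or.inl (hi.trans ⟨[], (a :: t₂) ++ (a :: t₃), by rw [hw2]; simp⟩)
          · exact Or.inl (hi.trans ⟨(x :: t₁) ++ (a :: t₂), [], by rw [hw3]; simp⟩)
          · rcases (by simpa using hj2.symm : b' = a) with rfl
            exact Or.inl (hjunc a' hj1)
        refine ⟨u, p, c, H1, H2, H3, H4, H5, H6, H7, H8, H9, H10, ?_, ?_, ?_⟩
        · intro a' b' hab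
          rcases H11 a' b' hab with h | h
          · exact htrans a' b' h
          · exact (htrans b' a' h).symm
        · intro a' b' hab
          rcases H12 a' b' hab with h | h
          · exact htrans a' b' h
          · exact (htrans b' a' h).symm
        · have hle : ((x :: t₁) ++ (a :: t₃)).length ≤ w.length := by
            rw [hwlen]; simp; omega
          omega
      · -- inner walk m is odd
        have hmodd : Odd (((a :: t₂) ++ [a]).length - 1) := by simpa using hd
        have hmlen : ((a :: t₂) ++ [a]).length ≤ n := by
          have := hwlen ▸ hlen
          simp only [List.length_append, List.length_cons, List.length_nil]
          omega
        obtain ⟨u, p₁, c₁, G1, G2, G3, G4, G5, G6, G7, G8, G9, G10, G11, G12, G13⟩ :=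
          ih _ a hmlen (hc.infix hminf) rfl hmlast hmodd
        -- uses of m are uses of w
        have hmuse : ∀ a' b', ([a', b'] <:+: ((a :: t₂) ++ [a]) ∨
            [b', a'] <:+: ((a :: t₂) ++ [a])) → ([a', b'] <:+: w ∨ [b', a'] <:+: w) := by
          intro a' b' hab
          rcases hab with h | h
          · exact Or.inl (h.trans hminf)
          · exact Or.inr (h.trans hminf)
        -- choose the connector: prefix q or reversed suffix
        obtain ⟨conn, hch, hcl, hcc, hcp, hce⟩ :
            ∃ conn : List α, conn.head? = some x ∧ conn.getLast? = some a ∧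
              conn.Chain' R ∧
              (∀ a' b', [a', b'] <:+: conn → ([a', b'] <:+: w ∨ [b', a'] <:+: w)) ∧
              2 * (conn.length - 1) ≤ t₁.length + t₃.length + 1 := by
          by_cases hie : t₁.length + 1 ≤ t₃.length
          · refine ⟨(x :: t₁) ++ [a], rfl, by
              rw [List.getLast?_append_of_ne_nil _ (by simp : ([a] : List α) ≠ [])]; rfl,
              hc.infix ⟨[], t₂ ++ (a :: t₃), by rw [hw2]; simp⟩, ?_, by simp; omega⟩
            intro a' b' hab
            exact Or.inl (hab.trans ⟨[], t₂ ++ (a :: t₃), by rw [hw2]; simp⟩)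
          · refine ⟨(a :: t₃).reverse, ?_, ?_, ?_, ?_, by simp; omega⟩
            · rw [List.head?_reverse, ← hwlast]; exact hl
            · rw [List.getLast?_reverse]; rfl
            · unfold List.Chain'
              rw [List.isChain_reverse]
              exact (hc.infix ⟨(x :: t₁) ++ (a :: t₂), [], by rw [hw3]; simp⟩).imp
                (fun a b h => hsym a b h)
            · intro a' b' hab
              exact Or.inr ((infix_pair_reverse hab).trans
                ⟨(x :: t₁) ++ (a :: t₂), [], by rw [hw3]; simp⟩)
        -- the connecting walk W
        set W := conn ++ p₁.tail with hWdef
        have hWc : W.Chain' R := glue_chain' hcl G1 hcc G4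
        have hWh : W.head? = some x := by
          rw [hWdef, glue_head? (by rintro rfl; simp at hch)]; exact hch
        have hWl : W.getLast? = some u := by rw [hWdef, glue_getLast? hcl G1]; exact G2
        have hWlen : W.length = conn.length + p₁.length - 1 := glue_length G1
        have hWpair : ∀ a' b', [a', b'] <:+: W → ([a', b'] <:+: w ∨ [b', a'] <:+: w) := by
          intro a' b' hab
          rw [← mem_pairs_iff_infix, hWdef, pairs_glue hcl G1, List.mem_append] at hab
          rcases hab with h | h
          · exact hcp a' b' (mem_pairs_iff_infix.1 h)
          · exact hmuse a' b' (G11 a' b' (mem_pairs_iff_infix.1 h))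
        -- find the first vertex of W that lies on c₁
        have hWu : u ∈ W := mem_of_getLast? hWl
        obtain ⟨W₁, v, W₂, hWsplit, hvc, hW₁⟩ :=
          exists_first_hit (S := fun y => y ∈ c₁) ⟨u, hWu, mem_of_head? G5⟩
        have hWtpre : (W₁ ++ [v]) <:+: W := ⟨[], W₂, by rw [hWsplit]; simp⟩
        have hWth : (W₁ ++ [v]).head? = some x := by
          rw [hWsplit] at hWh
          cases W₁ with
          | nil => simpa using hWh
          | cons h t => simpa using hWh
        have hWtl : (W₁ ++ [v]).getLast? = some v := by
          rw [List.getLast?_append_of_ne_nil _ (by simp : ([v] : List α) ≠ [])]; rfl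
        obtain ⟨p, P1, P2, P3, P4, P5, P6, P7⟩ :=
          bypass (W₁ ++ [v]).length (le_refl _) (hWc.infix hWtpre) hWth hWtl
        -- rotate c₁ to start at v
        obtain ⟨c₂, C1, C2, C3, C4, C5, C6, C7⟩ := rotate_closed G5 G6 G7 G9 hvc
        refine ⟨v, p, c₂, P3, P4, P1, P2, C1, C2, C3, by rw [C5]; exact G8, C4, ?_, ?_, ?_, ?_⟩
        · -- disjointness
          intro v' hv' hv'c₂
          have hv'p : v' ∈ p := List.mem_of_mem_dropLast hv'
          have hv'W : v' ∈ W₁ ++ [v] := P7 v' hv'p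
          rcases List.mem_append.1 hv'W with h | h
          · exact hW₁ v' h (C7 v' hv'c₂)
          · rw [List.mem_singleton] at h
            subst h
            have hpd : p = p.dropLast ++ [v'] := eq_dropLast_append P4
            have := List.nodup_append.1 (hpd ▸ P1)
            exact this.2.2 v' hv' v' (List.mem_singleton_self v') rfl
        · intro a' b' hab
          exact hWpair a' b' ((P6 a' b' hab).trans hWtpre)
        · intro a' b' hab
          exact hmuse a' b' (G12 a' b' (C6 a' b' hab))
        · -- length accounting
          have h1 : p.length ≤ W₁.length + 1 := by simpa using P5
          have h2 : W.length = W₁.length + W₂.length + 1 := by rw [hWsplit]; simp; omega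
          have h3 : 2 * (p₁.length - 1) + (c₁.length - 1) ≤ t₂.length + 1 := by
            simpa using G13
          have h4 : p₁.length ≥ 1 := by
            rw [eq_cons_of_head? G1]; simp
          have h5 : conn.length ≥ 1 := by
            rw [eq_cons_of_head? hch]; simp
          have h6 : c₁.length ≥ 1 := by
            rw [eq_cons_of_head? G5]; simp
          rw [C5, hwlen]
          omega
lemma pair_swap_not_nodup {a b : α} :
    ∀ (s₁ : List α) (t₁ : List α) (s₂ : List α) (t₂ : List α),
    s₁ ++ a :: b :: t₁ = s₂ ++ b :: a :: t₂ → ¬ (s₁ ++ a :: b :: t₁).Nodup := by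
  intro s₁
  induction s₁ with
  | nil =>
    intro t₁ s₂ t₂ heq hnd
    simp only [List.nil_append] at heq hnd
    cases s₂ with
    | nil =>
      simp only [List.nil_append, List.cons.injEq] at heq
      obtain ⟨rfl, -⟩ := heq
      exact (List.nodup_cons.1 hnd).1 (List.mem_cons_self)
    | cons h s₂' =>
      simp only [List.cons_append, List.cons.injEq] at heq
      obtain ⟨rfl, heq2⟩ := heq
      have : a ∈ b :: t₁ := by
        rw [heq2]
        exact List.mem_append.2 (Or.inr (List.mem_cons_of_mem _ (List.mem_cons_self)))
      exact (List.nodup_cons.1 hnd).1 this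
  | cons h s₁' ih =>
    intro t₁ s₂ t₂ heq hnd
    cases s₂ with
    | nil =>
      simp only [List.nil_append, List.cons_append, List.cons.injEq] at heq
      obtain ⟨rfl, heq2⟩ := heq
      have hb : h ∈ s₁' ++ a :: h :: t₁ :=
        List.mem_append.2 (Or.inr (List.mem_cons_of_mem _ (List.mem_cons_self)))
      exact (List.nodup_cons.1 (by simpa using hnd)).1 hb
    | cons h2 s₂' =>
      simp only [List.cons_append, List.cons.injEq] at heq
      obtain ⟨rfl, heq2⟩ := heq
      rw [List.cons_append] at hnd
      exact ih t₁ s₂' t₂ heq2 (List.nodup_cons.1 hnd).2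

lemma not_pair_and_swap {p : List α} (hnd : p.Nodup) {a b : α}
    (h1 : (a, b) ∈ pairs p) (h2 : (b, a) ∈ pairs p) : False := by
  obtain ⟨s₁, t₁, he1⟩ := mem_pairs_iff_infix.1 h1
  obtain ⟨s₂, t₂, he2⟩ := mem_pairs_iff_infix.1 h2
  have he1' : s₁ ++ a :: b :: t₁ = p := by rw [← he1]; simp
  have he2' : s₂ ++ b :: a :: t₂ = p := by rw [← he2]; simp
  exact pair_swap_not_nodup s₁ t₁ s₂ t₂ (by rw [he1', he2']) (by rw [he1']; exact hnd)

lemma pairs_nodup_of_dropLast {l : List α} (h : l.dropLast.Nodup) : (pairs l).Nodup := by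
  have := map_fst_pairs l
  exact List.Nodup.of_map Prod.fst (this ▸ h)

theorem tau_exists {R : α → α → Prop} (hsym : ∀ a b, R a b → R b a)
    (w : List α) (x : α) (hc : w.Chain' R) (hh : w.head? = some x)
    (hl : w.getLast? = some x) (hodd : Odd (w.length - 1)) :
    ∃ τ : List α, τ.head? = some x ∧ τ.getLast? = some x ∧ Odd (τ.length - 1) ∧
      τ.length ≤ w.length ∧ (pairs τ).Nodup ∧
      (∀ a b, (a, b) ∈ pairs τ → ([a, b] <:+: w ∨ [b, a] <:+: w)) := by
  obtain ⟨u, p, c, H1, H2, H3, H4, H5, H6, H7, H8, H9, H10, H11, H12, H13⟩ :=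
    decomp hsym w.length w x (le_refl _) hc hh hl hodd
  have hpne : p ≠ [] := by rintro rfl; simp at H1
  have hplen : 1 ≤ p.length := List.length_pos_iff.2 hpne
  have hclen : 1 ≤ c.length := by
    rw [eq_cons_of_head? H5]; simp
  have hAlast : (p ++ c.tail).getLast? = some u := by rw [glue_getLast? H2 H5]; exact H6
  have hBhead : p.reverse.head? = some u := by rw [List.head?_reverse]; exact H2
  refine ⟨(p ++ c.tail) ++ p.reverse.tail, ?_, ?_, ?_, ?_, ?_, ?_⟩
  · rw [glue_head? (by simp [hpne]), glue_head? hpne]; exact H1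
  · rw [glue_getLast? hAlast hBhead, List.getLast?_reverse]; exact H1
  · have hlen1 : (p ++ c.tail).length = p.length + c.length - 1 := glue_length H5
    have hlen2 : ((p ++ c.tail) ++ p.reverse.tail).length
        = (p ++ c.tail).length + p.length - 1 := by
      rw [glue_length hBhead, List.length_reverse]
    rcases H8 with ⟨k, hk⟩
    refine ⟨p.length - 1 + k, by omega⟩
  · have hlen1 : (p ++ c.tail).length = p.length + c.length - 1 := glue_length H5
    have hlen2 : ((p ++ c.tail) ++ p.reverse.tail).length
        = (p ++ c.tail).length + p.length - 1 := by
      rw [glue_length hBhead, List.length_reverse]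
    have hwlen : 1 ≤ w.length := by rw [eq_cons_of_head? hh]; simp
    omega
  · rw [pairs_glue hAlast hBhead, pairs_glue H2 H5]
    have hnd1 : (pairs p).Nodup :=
      pairs_nodup_of_dropLast (H3.sublist (List.dropLast_sublist _))
    have hnd2 : (pairs c).Nodup := pairs_nodup_of_dropLast H9
    have hnd3 : (pairs p.reverse).Nodup :=
      pairs_nodup_of_dropLast ((List.nodup_reverse.2 H3).sublist (List.dropLast_sublist _))
    rw [List.nodup_append, List.nodup_append]
    refine ⟨⟨hnd1, hnd2, ?_⟩, hnd3, ?_⟩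
    · rintro q hq1 _ hq2 rfl
      obtain ⟨a, b, rfl⟩ : ∃ a b, q = (a, b) := ⟨q.1, q.2, rfl⟩
      exact H10 a (fst_mem_dropLast_of_mem_pairs hq1)
        ((List.dropLast_sublist c).subset (fst_mem_dropLast_of_mem_pairs hq2))
    · rintro q hq1 _ hq2 rfl
      obtain ⟨a, b, rfl⟩ : ∃ a b, q = (a, b) := ⟨q.1, q.2, rfl⟩
      have hswap : (b, a) ∈ pairs p := by
        rw [mem_pairs_iff_infix]
        exact infix_pair_reverse (mem_pairs_iff_infix.1 hq2)
      rcases List.mem_append.1 hq1 with h | h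
      · exact not_pair_and_swap H3 h hswap
      · have hbc : b ∈ c := (List.tail_sublist c).subset (snd_mem_tail_of_mem_pairs h)
        exact H10 b (fst_mem_dropLast_of_mem_pairs hswap) hbc
  · intro a b hab
    rw [pairs_glue hAlast hBhead, pairs_glue H2 H5] at hab
    rcases List.mem_append.1 hab with h | h
    · rcases List.mem_append.1 h with h2 | h2
      · exact H11 a b (mem_pairs_iff_infix.1 h2)
      · exact H12 a b (mem_pairs_iff_infix.1 h2)
    · exact (H11 b a (infix_pair_reverse (mem_pairs_iff_infix.1 h))).symm
noncomputable def altSum (ψ : α → ℝ) : List α → ℝ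
  | [] => 0
  | [_] => 0
  | a :: b :: l => (ψ a + ψ b) - altSum ψ (b :: l)

lemma altSum_eq (ψ : α → ℝ) : ∀ (l : List α) (x u : α), l.head? = some x →
    l.getLast? = some u → altSum ψ l = ψ x - (-1 : ℝ) ^ (l.length - 1) * ψ u := by
  intro l
  induction l with
  | nil => intro x u hx _; simp at hx
  | cons a m ih =>
    intro x u hx hu
    have hax : a = x := by simpa using hx
    subst hax
    cases m with
    | nil =>
      have : a = u := by simpa using hu
      subst this
      simp [altSum]
    | cons b m' =>
      have hbu : (b :: m').getLast? = some u := by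
        rw [List.getLast?_cons_cons] at hu; exact hu
      have := ih (x := b) (u := u) rfl hbu
      show (ψ a + ψ b) - altSum ψ (b :: m') = _
      rw [this]
      have hlen : (a :: b :: m').length - 1 = ((b :: m').length - 1) + 1 := by
        simp
      rw [hlen, pow_succ]
      ring

lemma pairs_sum_sq_nonneg (ψ : α → ℝ) (l : List α) :
    0 ≤ ((pairs l).map (fun q => (ψ q.1 + ψ q.2) ^ 2)).sum := by
  apply List.sum_nonneg
  intro y hy
  obtain ⟨q, _, rfl⟩ := List.mem_map.1 hy
  exact sq_nonneg _

lemma altSum_sq_le (ψ : α → ℝ) : ∀ l : List α,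
    (altSum ψ l) ^ 2 ≤ ((l.length - 1 : ℕ) : ℝ) *
      ((pairs l).map (fun q => (ψ q.1 + ψ q.2) ^ 2)).sum := by
  intro l
  induction l with
  | nil => simp [altSum]
  | cons a m ih =>
    cases m with
    | nil => simp [altSum]
    | cons b m' =>
      have hS' : 0 ≤ ((pairs (b :: m')).map (fun q => (ψ q.1 + ψ q.2) ^ 2)).sum :=
        pairs_sum_sq_nonneg ψ _
      show ((ψ a + ψ b) - altSum ψ (b :: m')) ^ 2 ≤ _
      have hlen : ((a :: b :: m').length - 1 : ℕ) = ((b :: m').length - 1 : ℕ) + 1 := by simp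
      rw [hlen]
      rw [pairs_cons_cons, List.map_cons, List.sum_cons]
      set n' : ℝ := (((b :: m').length - 1 : ℕ) : ℝ) with hn'
      set d : ℝ := ψ a + ψ b
      set A : ℝ := altSum ψ (b :: m')
      set S' : ℝ := ((pairs (b :: m')).map (fun q => (ψ q.1 + ψ q.2) ^ 2)).sum
      have hn'0 : 0 ≤ n' := by rw [hn']; positivity
      push_cast
      have hIH : A ^ 2 ≤ n' * S' := ih
      rcases eq_or_lt_of_le hn'0 with h0 | hpos
      · have hA0 : A = 0 := by nlinarith [sq_nonneg A]
        rw [hA0]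
        nlinarith [hS', hn'0, mul_nonneg hn'0 hS', mul_nonneg hn'0 (sq_nonneg d), hn']
      · nlinarith [sq_nonneg (n' * d + A),
          mul_nonneg (by linarith : (0:ℝ) ≤ 1 + n') (sub_nonneg.2 hIH), hpos]
end WalkAux

open WalkAux in
/-- Let `M` be an ergodic time-reversible Markov chain on a finite
state space, and for each state `x` fix a closed walk `σ x` from `x` to `x` of odd
length in the underlying graph of the chain.  With
`η = max_{e ∈ Γ} Q(e)⁻¹ ∑_{x : e ∈ σ_x} |σ_x| π(x)`, the smallest eigenvalue
`λ_{N-1}` of the chain satisfies `(1 + λ_{N-1})⁻¹ ≤ η / 2`. -/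
theorem smallest_eigenvalue_odd_cycle_bound {Ω : Type*} [Fintype Ω] [DecidableEq Ω]
    [Nonempty Ω] (P : Matrix Ω Ω ℝ) (π : Ω → ℝ)
    (hP0 : ∀ x y, 0 ≤ P x y) (hP1 : ∀ x, ∑ y, P x y = 1)
    (hπpos : ∀ x, 0 < π x) (hπsum : ∑ x, π x = 1)
    (hrev : ∀ x y, π x * P x y = π y * P y x)
    (herg : ∃ t : ℕ, ∀ x y, 0 < (P ^ t) x y)
    (σ : Ω → List Ω)
    (hσstart : ∀ x, (σ x).head? = some x)
    (hσend : ∀ x, (σ x).getLast? = some x)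
    (hσchain : ∀ x, (σ x).Chain' fun a b => 0 < P a b)
    (hσodd : ∀ x, Odd ((σ x).length - 1))
    (η : ℝ)
    (hη : IsGreatest
      {r : ℝ | ∃ a b : Ω, 0 < P a b ∧
        r = (π a * P a b)⁻¹ *
          ∑ x ∈ Finset.univ.filter (fun x => WalkUses (σ x) a b),
            (((σ x).length : ℝ) - 1) * π x} η)
    (lam : ℝ)
    (hlam : IsLeast {l : ℝ | ∃ ψ : Ω → ℝ, ψ ≠ 0 ∧ P.mulVec ψ = l • ψ} lam) :
    (1 + lam)⁻¹ ≤ η / 2 := by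
  classical
  obtain ⟨ψ, hψne, hψeig⟩ := hlam.1
  have hsym : ∀ a b : Ω, 0 < P a b → 0 < P b a := by
    intro a b h
    have h2 : 0 < π a * P a b := mul_pos (hπpos a) h
    rw [hrev a b] at h2
    rcases (hP0 b a).eq_or_lt with he | hl
    · rw [← he, mul_zero] at h2; exact absurd h2 (lt_irrefl 0)
    · exact hl
  have hσlen : ∀ x, 1 ≤ (σ x).length := by
    intro x
    rw [eq_cons_of_head? (hσstart x)]; simp
  -- choose the good closed odd walks τ x
  have hτex := fun x => tau_exists (R := fun a b => 0 < P a b) hsym (σ x) x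
    (hσchain x) (hσstart x) (hσend x) (hσodd x)
  choose τ hτ1 hτ2 hτ3 hτ4 hτ5 hτ6 using hτex
  have huse : ∀ x a b, (a, b) ∈ pairs (τ x) → WalkUses (σ x) a b := by
    intro x a b h
    rcases hτ6 x a b h with hi | hi
    · obtain ⟨s, t, hst⟩ := hi; exact Or.inl ⟨s, t, by rw [← hst]; simp⟩
    · obtain ⟨s, t, hst⟩ := hi; exact Or.inr ⟨s, t, by rw [← hst]; simp⟩
  have hposP : ∀ x a b, (a, b) ∈ pairs (τ x) → 0 < P a b := by
    intro x a b h
    rcases hτ6 x a b h with hi | hi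
    · exact chain'_iff_pairs.1 (hσchain x) a b (mem_pairs_iff_infix.2 hi)
    · exact hsym _ _ (chain'_iff_pairs.1 (hσchain x) b a (mem_pairs_iff_infix.2 hi))
  have hSpos : 0 < ∑ x, π x * ψ x ^ 2 := by
    have : ∃ x₀, ψ x₀ ≠ 0 := by
      by_contra hcon
      push_neg at hcon
      exact hψne (funext hcon)
    obtain ⟨x₀, hx₀⟩ := this
    refine Finset.sum_pos' (fun i _ => mul_nonneg (hπpos i).le (sq_nonneg _)) ⟨x₀,
      Finset.mem_univ _, mul_pos (hπpos x₀)
        (lt_of_le_of_ne (sq_nonneg _) (Ne.symm (pow_ne_zero 2 hx₀)))⟩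
  have hη0 : 0 ≤ η := by
    obtain ⟨a, b, hPab, hval⟩ := hη.1
    rw [hval]
    refine mul_nonneg (inv_nonneg.2 (mul_pos (hπpos a) hPab).le) (Finset.sum_nonneg ?_)
    intro x _
    refine mul_nonneg ?_ (hπpos x).le
    have := hσlen x
    have h1 : (1 : ℝ) ≤ ((σ x).length : ℝ) := by exact_mod_cast this
    linarith
  -- the Dirichlet-type identity
  have hmv : ∀ x, ∑ y, P x y * ψ y = lam * ψ x := by
    intro x
    have := congrFun hψeig x
    simpa [Matrix.mulVec, dotProduct] using this
  have hF : (∑ x, ∑ y, π x * P x y * (ψ x + ψ y) ^ 2)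
      = 2 * (1 + lam) * ∑ x, π x * ψ x ^ 2 := by
    have hexp : ∀ x : Ω, ∑ y, π x * P x y * (ψ x + ψ y) ^ 2
        = (∑ y, π x * P x y * ψ x ^ 2) + ((∑ y, 2 * ((π x * ψ x) * (P x y * ψ y)))
          + ∑ y, π x * P x y * ψ y ^ 2) := by
      intro x
      rw [← Finset.sum_add_distrib, ← Finset.sum_add_distrib]
      exact Finset.sum_congr rfl fun y _ => by ring
    rw [Finset.sum_congr rfl fun x _ => hexp x, Finset.sum_add_distrib,
      Finset.sum_add_distrib]
    have hT1 : (∑ x, ∑ y, π x * P x y * ψ x ^ 2) = ∑ x, π x * ψ x ^ 2 := by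
      refine Finset.sum_congr rfl fun x _ => ?_
      calc ∑ y, π x * P x y * ψ x ^ 2 = ∑ y, (π x * ψ x ^ 2) * P x y :=
            Finset.sum_congr rfl fun y _ => by ring
        _ = (π x * ψ x ^ 2) * ∑ y, P x y := by rw [Finset.mul_sum]
        _ = π x * ψ x ^ 2 := by rw [hP1 x, mul_one]
    have hT2 : (∑ x, ∑ y, 2 * ((π x * ψ x) * (P x y * ψ y)))
        = 2 * lam * ∑ x, π x * ψ x ^ 2 := by
      rw [Finset.mul_sum]
      refine Finset.sum_congr rfl fun x _ => ?_
      calc ∑ y, 2 * ((π x * ψ x) * (P x y * ψ y))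
          = 2 * ((π x * ψ x) * ∑ y, P x y * ψ y) := by
            rw [Finset.mul_sum, Finset.mul_sum]
        _ = 2 * ((π x * ψ x) * (lam * ψ x)) := by rw [hmv x]
        _ = 2 * lam * (π x * ψ x ^ 2) := by ring
    have hT3 : (∑ x, ∑ y, π x * P x y * ψ y ^ 2) = ∑ x, π x * ψ x ^ 2 := by
      have hstep : (∑ x, ∑ y, π x * P x y * ψ y ^ 2)
          = ∑ x, ∑ y, π y * P y x * ψ y ^ 2 :=
        Finset.sum_congr rfl fun x _ => Finset.sum_congr rfl fun y _ => by
          rw [hrev x y]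
      rw [hstep, Finset.sum_comm]
      refine Finset.sum_congr rfl fun y _ => ?_
      calc ∑ x, π y * P y x * ψ y ^ 2 = ∑ x, (π y * ψ y ^ 2) * P y x :=
            Finset.sum_congr rfl fun x _ => by ring
        _ = (π y * ψ y ^ 2) * ∑ x, P y x := by rw [Finset.mul_sum]
        _ = π y * ψ y ^ 2 := by rw [hP1 y, mul_one]
    rw [hT1, hT2, hT3]
    ring
  -- the key combinatorial estimate
  have hper : ∀ x, 4 * ψ x ^ 2 ≤ (((σ x).length - 1 : ℕ) : ℝ) *
      ∑ q ∈ (pairs (τ x)).toFinset, (ψ q.1 + ψ q.2) ^ 2 := by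
    intro x
    have h2ψ : altSum ψ (τ x) = 2 * ψ x := by
      rw [altSum_eq ψ (τ x) x x (hτ1 x) (hτ2 x), Odd.neg_one_pow (hτ3 x)]
      ring
    have hcs := altSum_sq_le ψ (τ x)
    rw [h2ψ] at hcs
    have hsum_eq : ∑ q ∈ (pairs (τ x)).toFinset, (ψ q.1 + ψ q.2) ^ 2
        = ((pairs (τ x)).map (fun q => (ψ q.1 + ψ q.2) ^ 2)).sum :=
      List.sum_toFinset _ (hτ5 x)
    have hls0 := pairs_sum_sq_nonneg ψ (τ x)
    have hlen : (((τ x).length - 1 : ℕ) : ℝ) ≤ (((σ x).length - 1 : ℕ) : ℝ) := by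
      exact_mod_cast Nat.sub_le_sub_right (hτ4 x) 1
    calc 4 * ψ x ^ 2 = (2 * ψ x) ^ 2 := by ring
      _ ≤ (((τ x).length - 1 : ℕ) : ℝ) *
          ((pairs (τ x)).map (fun q => (ψ q.1 + ψ q.2) ^ 2)).sum := hcs
      _ ≤ (((σ x).length - 1 : ℕ) : ℝ) *
          ((pairs (τ x)).map (fun q => (ψ q.1 + ψ q.2) ^ 2)).sum :=
        mul_le_mul_of_nonneg_right hlen hls0
      _ = _ := by rw [hsum_eq]
  -- per-edge weight bound
  have hq : ∀ a b : Ω,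
      (∑ x, if (a, b) ∈ (pairs (τ x)).toFinset
        then π x * ((((σ x).length - 1 : ℕ) : ℝ)) else 0) ≤ η * (π a * P a b) := by
    intro a b
    by_cases hall : ∀ x, (a, b) ∉ (pairs (τ x)).toFinset
    · rw [Finset.sum_congr rfl fun x _ => if_neg (hall x)]
      simp only [Finset.sum_const_zero]
      exact mul_nonneg hη0 (mul_nonneg (hπpos a).le (hP0 a b))
    · push_neg at hall
      obtain ⟨x₀, hx₀⟩ := hall
      have hPab : 0 < P a b := hposP x₀ a b (List.mem_toFinset.1 hx₀)
      have hQ : 0 < π a * P a b := mul_pos (hπpos a) hPab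
      have hWle : (∑ x, if (a, b) ∈ (pairs (τ x)).toFinset
          then π x * ((((σ x).length - 1 : ℕ) : ℝ)) else 0)
          ≤ ∑ x ∈ Finset.univ.filter (fun x => WalkUses (σ x) a b),
            (((σ x).length : ℝ) - 1) * π x := by
        rw [Finset.sum_filter]
        refine Finset.sum_le_sum fun x _ => ?_
        by_cases hxq : (a, b) ∈ (pairs (τ x)).toFinset
        · rw [if_pos hxq, if_pos (huse x a b (List.mem_toFinset.1 hxq))]
          have hcast : (((σ x).length - 1 : ℕ) : ℝ) = ((σ x).length : ℝ) - 1 := by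
            have := hσlen x
            push_cast [Nat.cast_sub this]
            ring
          rw [hcast]; ring_nf; exact le_refl _
        · rw [if_neg hxq]
          split
          · refine mul_nonneg ?_ (hπpos x).le
            have h1 : (1 : ℝ) ≤ ((σ x).length : ℝ) := by exact_mod_cast hσlen x
            linarith
          · exact le_refl 0
      have hmem := hη.2 ⟨a, b, hPab, rfl⟩
      calc (∑ x, if (a, b) ∈ (pairs (τ x)).toFinset
            then π x * ((((σ x).length - 1 : ℕ) : ℝ)) else 0)
          ≤ ∑ x ∈ Finset.univ.filter (fun x => WalkUses (σ x) a b),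
            (((σ x).length : ℝ) - 1) * π x := hWle
        _ = (π a * P a b) * ((π a * P a b)⁻¹ *
            ∑ x ∈ Finset.univ.filter (fun x => WalkUses (σ x) a b),
              (((σ x).length : ℝ) - 1) * π x) := by
            rw [← mul_assoc, mul_inv_cancel₀ hQ.ne', one_mul]
        _ ≤ (π a * P a b) * η := mul_le_mul_of_nonneg_left hmem hQ.le
        _ = η * (π a * P a b) := by ring
  -- assemble the global bound
  have hmain : 4 * (∑ x, π x * ψ x ^ 2)
      ≤ η * ∑ x, ∑ y, π x * P x y * (ψ x + ψ y) ^ 2 := by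
    have step1 : 4 * (∑ x, π x * ψ x ^ 2) ≤ ∑ x, π x * ((((σ x).length - 1 : ℕ) : ℝ) *
        ∑ q ∈ (pairs (τ x)).toFinset, (ψ q.1 + ψ q.2) ^ 2) := by
      rw [Finset.mul_sum]
      refine Finset.sum_le_sum fun x _ => ?_
      calc 4 * (π x * ψ x ^ 2) = π x * (4 * ψ x ^ 2) := by ring
        _ ≤ _ := mul_le_mul_of_nonneg_left (hper x) (hπpos x).le
    have step2 : (∑ x, π x * ((((σ x).length - 1 : ℕ) : ℝ) *
        ∑ q ∈ (pairs (τ x)).toFinset, (ψ q.1 + ψ q.2) ^ 2))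
        = ∑ q : Ω × Ω, (∑ x, if q ∈ (pairs (τ x)).toFinset
            then π x * ((((σ x).length - 1 : ℕ) : ℝ)) else 0) * (ψ q.1 + ψ q.2) ^ 2 := by
      have hx1 : ∀ x, π x * ((((σ x).length - 1 : ℕ) : ℝ) *
          ∑ q ∈ (pairs (τ x)).toFinset, (ψ q.1 + ψ q.2) ^ 2)
          = ∑ q : Ω × Ω, (if q ∈ (pairs (τ x)).toFinset
              then π x * ((((σ x).length - 1 : ℕ) : ℝ)) else 0) * (ψ q.1 + ψ q.2) ^ 2 := by
        intro x
        rw [eq_comm]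
        calc (∑ q : Ω × Ω, (if q ∈ (pairs (τ x)).toFinset
                then π x * ((((σ x).length - 1 : ℕ) : ℝ)) else 0) * (ψ q.1 + ψ q.2) ^ 2)
            = ∑ q : Ω × Ω, (if q ∈ (pairs (τ x)).toFinset
                then π x * ((((σ x).length - 1 : ℕ) : ℝ)) * (ψ q.1 + ψ q.2) ^ 2 else 0) :=
              Finset.sum_congr rfl fun q _ => by split <;> simp
          _ = ∑ q ∈ Finset.univ ∩ (pairs (τ x)).toFinset,
                π x * ((((σ x).length - 1 : ℕ) : ℝ)) * (ψ q.1 + ψ q.2) ^ 2 :=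
              Finset.sum_ite_mem _ _ _
          _ = ∑ q ∈ (pairs (τ x)).toFinset,
                π x * ((((σ x).length - 1 : ℕ) : ℝ)) * (ψ q.1 + ψ q.2) ^ 2 := by
              rw [Finset.univ_inter]
          _ = π x * ((((σ x).length - 1 : ℕ) : ℝ)) *
                ∑ q ∈ (pairs (τ x)).toFinset, (ψ q.1 + ψ q.2) ^ 2 := by
              rw [← Finset.mul_sum]
          _ = π x * ((((σ x).length - 1 : ℕ) : ℝ) *
                ∑ q ∈ (pairs (τ x)).toFinset, (ψ q.1 + ψ q.2) ^ 2) := by ring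
      rw [Finset.sum_congr rfl fun x _ => hx1 x, Finset.sum_comm]
      exact Finset.sum_congr rfl fun q _ => (Finset.sum_mul _ _ _).symm
    have step3 : (∑ q : Ω × Ω, (∑ x, if q ∈ (pairs (τ x)).toFinset
            then π x * ((((σ x).length - 1 : ℕ) : ℝ)) else 0) * (ψ q.1 + ψ q.2) ^ 2)
        ≤ ∑ q : Ω × Ω, η * (π q.1 * P q.1 q.2) * (ψ q.1 + ψ q.2) ^ 2 := by
      refine Finset.sum_le_sum fun q _ => ?_
      exact mul_le_mul_of_nonneg_right (hq q.1 q.2) (sq_nonneg _)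
    have step4 : (∑ q : Ω × Ω, η * (π q.1 * P q.1 q.2) * (ψ q.1 + ψ q.2) ^ 2)
        = η * ∑ x, ∑ y, π x * P x y * (ψ x + ψ y) ^ 2 := by
      rw [Fintype.sum_prod_type, Finset.mul_sum]
      refine Finset.sum_congr rfl fun x _ => ?_
      rw [Finset.mul_sum]
      exact Finset.sum_congr rfl fun y _ => by ring
    calc 4 * (∑ x, π x * ψ x ^ 2) ≤ _ := step1
      _ = _ := step2
      _ ≤ _ := step3
      _ = _ := step4
  rw [hF] at hmain
  have h2 : 2 ≤ η * (1 + lam) := by nlinarith [hSpos, hmain]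
  have hpos : 0 < 1 + lam := by
    rcases lt_or_ge 0 (1 + lam) with h | h
    · exact h
    · nlinarith [hη0, h2, mul_nonpos_of_nonneg_of_nonpos hη0 h]
  rw [inv_eq_one_div, div_le_div_iff₀ hpos (by norm_num : (0:ℝ) < 2)]
  linarith
end

section
/- Let M be an ergodic time-reversible Markov chain on a finite state space Ω with transition matrix P and stationary distribution π, with eigenvalues 1 = λ_0 > λ_1 ≥ ... ≥ λ_{N−1} ≥ −1 where N = |Ω|. For each x ∈ Ω fix a closed walk σ_x from x to x of odd length in the underlying graph 𝒢 of the chain, and let Σ = {σ_x : x ∈ Ω}. Define η'(Σ) = max_{e∈Γ} (1/Q(e)) · ∑_{x∈Ω, e∈σ_x} π(x) and ℓ(Σ) = max_{x∈Ω} |σ_x|. Then (1 + λ_{N−1})^{-1} ≤ η'(Σ)·ℓ(Σ)/2. -/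
attribute [local instance] Classical.propDecidable

section Aux

lemma walkUses_symm' {Ω : Type*} {p : List Ω} {a b : Ω} (h : WalkUses p a b) :
    WalkUses p b a := h.symm

lemma getD_head' {Ω : Type*} {l : List Ω} {x d : Ω} (h : l.head? = some x) :
    l.getD 0 d = x := by
  cases l with
  | nil => simp at h
  | cons y t => simp_all

lemma getD_last' {Ω : Type*} {l : List Ω} {x d : Ω} (h : l.getLast? = some x) :
    l.getD (l.length - 1) d = x := by
  have hne : l ≠ [] := by rintro rfl; simp at h
  rw [List.getLast?_eq_getLast_of_ne_nil hne, Option.some_inj] at h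
  rw [List.getD_eq_getElem l d (by
    have := List.length_pos_iff.mpr hne; omega), ← h, List.getLast_eq_getElem]

lemma chain_getD' {Ω : Type*} {R : Ω → Ω → Prop} {l : List Ω} (h : l.Chain' R)
    (d : Ω) {i : ℕ} (hi : i + 1 < l.length) :
    R (l.getD i d) (l.getD (i+1) d) := by
  rw [List.getD_eq_getElem l d (by omega), List.getD_eq_getElem l d hi]
  exact List.isChain_iff_getElem.mp h i (by omega)

lemma walkUses_getD' {Ω : Type*} {l : List Ω} (d : Ω) {j : ℕ} (hj : j + 1 < l.length) :
    WalkUses l (l.getD j d) (l.getD (j+1) d) := by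
  left
  refine ⟨l.take j, l.drop (j+2), ?_⟩
  rw [List.getD_eq_getElem l d (by omega), List.getD_eq_getElem l d hj]
  conv_lhs => rw [← List.take_append_drop j l]
  congr 1
  rw [List.drop_eq_getElem_cons (by omega)]
  congr 1
  rw [List.drop_eq_getElem_cons hj]

lemma telescope_alt' (f : ℕ → ℝ) : ∀ k : ℕ,
    ∑ i ∈ Finset.range k, (-1 : ℝ)^i * (f i + f (i+1)) = f 0 - (-1 : ℝ)^k * f k := by
  intro k
  induction k with
  | zero => simp
  | succ k ih =>
    rw [Finset.sum_range_succ, ih, pow_succ]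
    ring

lemma sq_sum_le' (k : ℕ) (g : ℕ → ℝ) :
    (∑ i ∈ Finset.range k, g i)^2 ≤ (k : ℝ) * ∑ i ∈ Finset.range k, (g i)^2 := by
  have h := sq_sum_le_card_mul_sum_sq (s := Finset.range k) (f := g)
  simpa using h

lemma sum_key' {Ω : Type*} [Fintype Ω] [DecidableEq Ω] (k : ℕ) (w : ℕ → Ω) (F : Ω → Ω → ℝ) :
    ∑ i ∈ Finset.range k, F (w i) (w (i+1)) =
      ∑ a : Ω, ∑ b : Ω,
        (((Finset.range k).filter (fun i => w i = a ∧ w (i+1) = b)).card : ℝ) * F a b := by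
  classical
  have h := Finset.sum_fiberwise_of_maps_to (s := Finset.range k)
    (t := (Finset.univ : Finset (Ω × Ω)))
    (g := fun i => (w i, w (i+1))) (f := fun i => F (w i) (w (i+1)))
    (fun i _ => Finset.mem_univ _)
  rw [← h, Fintype.sum_prod_type]
  refine Finset.sum_congr rfl fun a _ => Finset.sum_congr rfl fun b _ => ?_
  have hfilter : (Finset.range k).filter (fun i => (w i, w (i+1)) = (a, b)) =
      (Finset.range k).filter (fun i => w i = a ∧ w (i+1) = b) := by
    apply Finset.filter_congr
    intro i _
    simp [Prod.ext_iff]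
  rw [← hfilter]
  rw [Finset.sum_congr rfl (fun i hi => ?_), Finset.sum_const, nsmul_eq_mul]
  simp only [Finset.mem_filter, Prod.mk.injEq] at hi
  rw [hi.2.1, hi.2.2]

lemma walk_reduce' {Ω : Type*} [DecidableEq Ω] (R : Ω → Ω → Prop) (k : ℕ) :
    ∀ v : ℕ → Ω, Odd k → v k = v 0 → (∀ i < k, R (v i) (v (i+1))) →
    ∃ k' : ℕ, ∃ v' : ℕ → Ω, Odd k' ∧ k' ≤ k ∧ v' 0 = v 0 ∧ v' k' = v' 0 ∧
      (∀ i < k', R (v' i) (v' (i+1))) ∧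
      (∀ i < k', ∃ j, j < k ∧ v' i = v j ∧ v' (i+1) = v (j+1)) ∧
      (∀ a b : Ω, a ≠ b →
        ((Finset.range k').filter (fun i => v' i = a ∧ v' (i+1) = b)).card +
        ((Finset.range k').filter (fun i => v' i = b ∧ v' (i+1) = a)).card ≤ 2) ∧
      (∀ a : Ω, ((Finset.range k').filter (fun i => v' i = a ∧ v' (i+1) = a)).card ≤ 1) := by
  induction k using Nat.strong_induction_on with
  | _ k IH =>
    intro v hodd hclosed hchain
    by_cases hrep : ∃ i j : ℕ, i < j ∧ j ≤ k ∧ i % 2 = j % 2 ∧ v i = v j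
    · obtain ⟨i, j, hij, hjk, hpar, heq⟩ := hrep
      set g := j - i with hg
      have hg2 : 2 ≤ g := by omega
      have hgeven : g % 2 = 0 := by omega
      set m := k - g with hm
      have hmk : m < k := by omega
      have hk1 : k % 2 = 1 := Nat.odd_iff.mp hodd
      have hmodd : Odd m := Nat.odd_iff.mpr (by omega)
      set w : ℕ → Ω := fun t => if t ≤ i then v t else v (t + g) with hw
      have hweq : ∀ t, t ≤ i → w t = v t := by
        intro t ht; show (if t ≤ i then v t else v (t + g)) = v t; rw [if_pos ht]
      have hweq' : ∀ t, ¬ t ≤ i → w t = v (t + g) := by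
        intro t ht; show (if t ≤ i then v t else v (t + g)) = v (t + g); rw [if_neg ht]
      have hw0 : w 0 = v 0 := hweq 0 (Nat.zero_le _)
      have hwm : w m = v 0 := by
        by_cases hcase : m ≤ i
        · have hmi : m = i := by omega
          have hjk' : j = k := by omega
          rw [hweq m hcase, hmi, heq, hjk', hclosed]
        · rw [hweq' m hcase, (by omega : m + g = k), hclosed]
      have hwchain : ∀ t < m, R (w t) (w (t+1)) := by
        intro t ht
        by_cases h1 : t < i
        · rw [hweq t (by omega), hweq (t+1) (by omega)]
          exact hchain t (by omega)
        · by_cases h2 : t = i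
          · have hjlt : j < k := by omega
            rw [hweq t (by omega), hweq' (t+1) (by omega), h2, heq,
              (by omega : i + 1 + g = j + 1)]
            exact hchain j hjlt
          · rw [hweq' t (by omega), hweq' (t+1) (by omega),
              (by omega : t + 1 + g = (t + g) + 1)]
            exact hchain (t + g) (by omega)
      have hwmap : ∀ t < m, ∃ j', j' < k ∧ w t = v j' ∧ w (t+1) = v (j'+1) := by
        intro t ht
        by_cases h1 : t < i
        · exact ⟨t, by omega, hweq t (by omega), hweq (t+1) (by omega)⟩
        · by_cases h2 : t = i
          · refine ⟨j, by omega, ?_, ?_⟩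
            · rw [hweq t (by omega), h2, heq]
            · rw [hweq' (t+1) (by omega), h2, (by omega : i + 1 + g = j + 1)]
          · refine ⟨t + g, by omega, hweq' t (by omega), ?_⟩
            rw [hweq' (t+1) (by omega), (by omega : t + 1 + g = (t + g) + 1)]
      obtain ⟨k', v', h1, h2, h3, h4, h5, h6, h7, h8⟩ :=
        IH m hmk w hmodd (hwm.trans hw0.symm) hwchain
      refine ⟨k', v', h1, by omega, h3.trans hw0, h4, h5, ?_, h7, h8⟩
      intro t ht
      obtain ⟨s, hs, e1, e2⟩ := h6 t ht
      obtain ⟨j', hj', f1, f2⟩ := hwmap s hs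
      exact ⟨j', hj', e1.trans f1, e2.trans f2⟩
    · -- no same-parity repeats
      push_neg at hrep
      have hocc : ∀ a : Ω, ((Finset.range (k+1)).filter (fun i => v i = a)).card ≤ 2 := by
        intro a
        have h2 := Finset.card_le_card_of_injOn (fun i => i % 2)
          (t := Finset.range 2)
          (s := (Finset.range (k+1)).filter (fun i => v i = a))
          (fun i _ => Finset.mem_range.mpr (Nat.mod_lt _ (by norm_num))) ?_
        · simpa using h2
        · intro i hi j hj hpar
          simp only [Finset.coe_filter, Set.mem_setOf_eq, Finset.mem_range] at hi hj
          by_contra hne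
          rcases lt_or_gt_of_ne hne with h | h
          · exact hrep i j h (by omega) hpar (hi.2.trans hj.2.symm)
          · exact hrep j i h (by omega) hpar.symm (hj.2.trans hi.2.symm)
      refine ⟨k, v, hodd, le_refl _, rfl, hclosed, hchain,
        fun i hi => ⟨i, hi, rfl, rfl⟩, ?_, ?_⟩
      · intro a b hab
        have hdisj : Disjoint ((Finset.range k).filter (fun i => v i = a ∧ v (i+1) = b))
            ((Finset.range k).filter (fun i => v i = b ∧ v (i+1) = a)) := by
          rw [Finset.disjoint_filter]
          rintro i _ ⟨h1, h2⟩ ⟨h3, h4⟩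
          exact hab (h1.symm.trans h3)
        rw [← Finset.card_union_of_disjoint hdisj, ← Finset.filter_or]
        have hcard := Finset.card_le_card_of_injOn (fun i => if v i = a then i else i + 1)
          (s := (Finset.range k).filter
            (fun i => (v i = a ∧ v (i+1) = b) ∨ (v i = b ∧ v (i+1) = a)))
          (t := (Finset.range (k+1)).filter (fun i => v i = a))
          ?_ ?_
        · exact hcard.trans (hocc a)
        · intro i hi
          simp only [Finset.mem_coe, Finset.mem_filter, Finset.mem_range] at hi ⊢
          by_cases hva : v i = a
          · rw [if_pos hva]; exact ⟨by omega, hva⟩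
          · have hib : v i = b ∧ v (i+1) = a := by tauto
            rw [if_neg hva]; exact ⟨by omega, hib.2⟩
        · have key : ∀ i ∈ ((Finset.range k).filter
              (fun i => (v i = a ∧ v (i+1) = b) ∨ (v i = b ∧ v (i+1) = a))),
              ∀ j ∈ ((Finset.range k).filter
              (fun i => (v i = a ∧ v (i+1) = b) ∨ (v i = b ∧ v (i+1) = a))),
              i < j → (if v i = a then i else i + 1) ≠ (if v j = a then j else j + 1) := by
            intro i hi j hj hlt
            simp only [Finset.mem_filter, Finset.mem_range] at hi hj
            by_cases hva : v i = a
            · rw [if_pos hva]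
              split <;> omega
            · have hib : v i = b ∧ v (i+1) = a := by tauto
              rw [if_neg hva]
              by_cases hvj : v j = a
              · rw [if_pos hvj]
                intro hcon
                have hji : j = i + 1 := by omega
                have hjb : v (j+1) = b := by
                  rcases hj.2 with ⟨_, h⟩ | ⟨h, _⟩
                  · exact h
                  · exact absurd (hvj.symm.trans h) hab
                have hi2 : v (i+2) = b := by
                  rw [(by omega : i + 2 = j + 1)]; exact hjb
                exact hrep i (i+2) (by omega) (by omega) (by omega)
                  (hib.1.trans hi2.symm)
              · rw [if_neg hvj]
                omega
          intro i hi j hj hpar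
          simp only [Finset.mem_coe] at hi hj
          by_contra hne
          rcases lt_or_gt_of_ne hne with h | h
          · exact key i hi j hj h hpar
          · exact key j hj i hi h hpar.symm
      · intro a
        rw [Finset.card_le_one]
        intro i hi j hj
        simp only [Finset.mem_filter, Finset.mem_range] at hi hj
        by_contra hne
        have main : ∀ i' j' : ℕ, i' < j' → j' < k → v i' = a → v (i'+1) = a →
            v j' = a → v (j'+1) = a → False := by
          intro i' j' hlt hjk h1 h2 h3 h4
          by_cases hp : i' % 2 = j' % 2
          · exact hrep i' j' hlt (by omega) hp (h1.trans h3.symm)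
          · exact hrep i' (j'+1) (by omega) (by omega) (by omega) (h1.trans h4.symm)
        rcases lt_or_gt_of_ne hne with h | h
        · exact main i j h hj.1 hi.2.1 hi.2.2 hj.2.1 hj.2.2
        · exact main j i h hi.1 hj.2.1 hj.2.2 hi.2.1 hi.2.2


end Aux

/-- Let `M` be an ergodic time-reversible Markov chain on a finite
state space, and for each state `x` fix a closed walk `σ x` from `x` to `x` of odd
length in the underlying graph of the chain.  With
`η' = max_{e ∈ Γ} Q(e)⁻¹ ∑_{x : e ∈ σ_x} π(x)` and `ℓ = max_x |σ_x|`, the smallest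
eigenvalue `λ_{N-1}` of the chain satisfies `(1 + λ_{N-1})⁻¹ ≤ η' ℓ / 2`. -/
theorem smallest_eigenvalue_odd_cycle_bound' {Ω : Type*} [Fintype Ω] [DecidableEq Ω]
    [Nonempty Ω] (P : Matrix Ω Ω ℝ) (π : Ω → ℝ)
    (hP0 : ∀ x y, 0 ≤ P x y) (hP1 : ∀ x, ∑ y, P x y = 1)
    (hπpos : ∀ x, 0 < π x) (hπsum : ∑ x, π x = 1)
    (hrev : ∀ x y, π x * P x y = π y * P y x)
    (herg : ∃ t : ℕ, ∀ x y, 0 < (P ^ t) x y)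
    (σ : Ω → List Ω)
    (hσstart : ∀ x, (σ x).head? = some x)
    (hσend : ∀ x, (σ x).getLast? = some x)
    (hσchain : ∀ x, (σ x).Chain' fun a b => 0 < P a b)
    (hσodd : ∀ x, Odd ((σ x).length - 1))
    (η' : ℝ)
    (hη' : IsGreatest
      {r : ℝ | ∃ a b : Ω, 0 < P a b ∧
        r = (π a * P a b)⁻¹ *
          ∑ x ∈ Finset.univ.filter (fun x => WalkUses (σ x) a b), π x} η')
    (ℓ : ℕ)
    (hℓ : IsGreatest {k : ℕ | ∃ x : Ω, k = (σ x).length - 1} ℓ)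
    (lam : ℝ)
    (hlam : IsLeast {l : ℝ | ∃ ψ : Ω → ℝ, ψ ≠ 0 ∧ P.mulVec ψ = l • ψ} lam) :
    (1 + lam)⁻¹ ≤ η' * (ℓ : ℝ) / 2 := by
  classical
  obtain ⟨ψ, hψne, hψeig⟩ := hlam.1
  set d : Ω := Classical.arbitrary Ω with hd
  set k : Ω → ℕ := fun x => (σ x).length - 1 with hk
  set v : Ω → ℕ → Ω := fun x i => (σ x).getD i d with hv
  have hlp : ∀ x, (σ x).length = k x + 1 := by
    intro x
    have hne : σ x ≠ [] := by
      intro h; have := hσstart x; rw [h] at this; simp at this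
    have := List.length_pos_iff.mpr hne
    simp only [hk]; omega
  have hv0 : ∀ x, v x 0 = x := fun x => getD_head' (hσstart x)
  have hvk : ∀ x, v x (k x) = x := fun x => getD_last' (hσend x)
  have hvchain : ∀ x, ∀ i < k x, 0 < P (v x i) (v x (i+1)) := by
    intro x i hi
    exact chain_getD' (hσchain x) d (by rw [hlp x]; omega)
  have hvuse : ∀ x, ∀ j < k x, WalkUses (σ x) (v x j) (v x (j+1)) := by
    intro x j hj
    exact walkUses_getD' d (by rw [hlp x]; omega)
  choose k' v' hodd' hle' h0' hclosed' hchain' hmap' hcnt2' hcnt1' using fun x =>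
    walk_reduce' (fun u w => 0 < P u w) (k x) (v x) (hσodd x)
      ((hvk x).trans (hv0 x).symm) (hvchain x)
  -- notation
  set S : ℝ := ∑ x, π x * ψ x ^ 2 with hSdef
  -- S positive
  obtain ⟨x₀, hx₀⟩ := Function.ne_iff.mp hψne
  have hS : 0 < S := by
    refine Finset.sum_pos' (fun x _ => mul_nonneg (hπpos x).le (sq_nonneg _)) ⟨x₀, Finset.mem_univ _, ?_⟩
    have h2 : 0 < ψ x₀ ^ 2 :=
      lt_of_le_of_ne (sq_nonneg _) (Ne.symm (pow_ne_zero 2 hx₀))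
    exact mul_pos (hπpos x₀) h2
  -- eigenvalue equation pointwise
  have hmv : ∀ a, ∑ b, P a b * ψ b = lam * ψ a := by
    intro a
    have h := congrFun hψeig a
    simpa [Matrix.mulVec, dotProduct] using h
  -- Dirichlet-type identity
  have hE : ∑ a, ∑ b, π a * P a b * (ψ a + ψ b)^2 = (2 + 2*lam) * S := by
    have expand : ∀ a b : Ω, π a * P a b * (ψ a + ψ b)^2 =
        π a * P a b * ψ a^2 + 2*((π a * ψ a) * (P a b * ψ b)) + π a * P a b * ψ b^2 := by
      intro a b; ring
    have t1 : ∀ a : Ω, ∑ b, π a * P a b * ψ a^2 = π a * ψ a^2 := by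
      intro a
      calc ∑ b, π a * P a b * ψ a ^ 2 = π a * ψ a^2 * ∑ b, P a b := by
            rw [Finset.mul_sum]; exact Finset.sum_congr rfl fun b _ => by ring
        _ = π a * ψ a ^ 2 := by rw [hP1 a, mul_one]
    have t2 : ∀ a : Ω, ∑ b, 2*((π a * ψ a) * (P a b * ψ b)) = 2 * lam * (π a * ψ a ^ 2) := by
      intro a
      calc ∑ b, 2*((π a * ψ a) * (P a b * ψ b)) = 2 * (π a * ψ a) * ∑ b, P a b * ψ b := by
            rw [Finset.mul_sum]; exact Finset.sum_congr rfl fun b _ => by ring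
        _ = 2 * lam * (π a * ψ a ^ 2) := by rw [hmv a]; ring
    have t3 : ∑ a, ∑ b, π a * P a b * ψ b^2 = S := by
      have step : ∀ a b : Ω, π a * P a b * ψ b^2 = π b * P b a * ψ b^2 := by
        intro a b; rw [hrev a b]
      calc ∑ a, ∑ b, π a * P a b * ψ b^2 = ∑ a, ∑ b, π b * P b a * ψ b^2 :=
            Finset.sum_congr rfl fun a _ => Finset.sum_congr rfl fun b _ => step a b
        _ = ∑ b, ∑ a, π b * P b a * ψ b^2 := Finset.sum_comm
        _ = ∑ b, π b * ψ b^2 := by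
            refine Finset.sum_congr rfl fun b _ => ?_
            calc ∑ a, π b * P b a * ψ b^2 = π b * ψ b^2 * ∑ a, P b a := by
                  rw [Finset.mul_sum]; exact Finset.sum_congr rfl fun a _ => by ring
              _ = π b * ψ b ^ 2 := by rw [hP1 b, mul_one]
        _ = S := rfl
    calc ∑ a, ∑ b, π a * P a b * (ψ a + ψ b)^2
        = ∑ a, ∑ b, (π a * P a b * ψ a^2 + 2*((π a * ψ a) * (P a b * ψ b))
            + π a * P a b * ψ b^2) :=
          Finset.sum_congr rfl fun a _ => Finset.sum_congr rfl fun b _ => expand a b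
      _ = (∑ a, ∑ b, π a * P a b * ψ a^2) + (∑ a, ∑ b, 2*((π a * ψ a) * (P a b * ψ b)))
            + ∑ a, ∑ b, π a * P a b * ψ b^2 := by
          simp only [Finset.sum_add_distrib]
      _ = S + 2 * lam * S + S := by
          rw [t3]
          congr 1
          congr 1
          · rw [Finset.sum_congr rfl fun a _ => t1 a]
          · rw [Finset.sum_congr rfl fun a _ => t2 a, ← Finset.mul_sum]
      _ = (2 + 2*lam) * S := by ring
  -- walk uses transfer
  have hWu : ∀ x a b i, i < k' x → v' x i = a → v' x (i+1) = b → WalkUses (σ x) a b := by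
    intro x a b i hi h1 h2
    obtain ⟨j, hj, e1, e2⟩ := hmap' x i hi
    have h := hvuse x j hj
    rwa [← e1, ← e2, h1, h2] at h
  -- per-pair congestion bound
  have hpair : ∀ a b : Ω,
      (∑ x, π x * (((Finset.range (k' x)).filter
          (fun i => v' x i = a ∧ v' x (i+1) = b)).card : ℝ)) +
      (∑ x, π x * (((Finset.range (k' x)).filter
          (fun i => v' x i = b ∧ v' x (i+1) = a)).card : ℝ)) ≤
      2 * η' * (π a * P a b) := by
    intro a b
    by_cases hab : 0 < P a b
    · have hQ : 0 < π a * P a b := mul_pos (hπpos a) hab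
      have hmem : (π a * P a b)⁻¹ *
          (∑ x ∈ Finset.univ.filter (fun x => WalkUses (σ x) a b), π x) ≤ η' :=
        hη'.2 ⟨a, b, hab, rfl⟩
      rw [inv_mul_le_iff₀ hQ] at hmem
      have hper : ∀ x : Ω,
          π x * (((Finset.range (k' x)).filter
              (fun i => v' x i = a ∧ v' x (i+1) = b)).card : ℝ) +
          π x * (((Finset.range (k' x)).filter
              (fun i => v' x i = b ∧ v' x (i+1) = a)).card : ℝ) ≤
          2 * (if WalkUses (σ x) a b then π x else 0) := by
        intro x
        by_cases hw : WalkUses (σ x) a b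
        · rw [if_pos hw]
          have hle2 : ((Finset.range (k' x)).filter
              (fun i => v' x i = a ∧ v' x (i+1) = b)).card +
              ((Finset.range (k' x)).filter
              (fun i => v' x i = b ∧ v' x (i+1) = a)).card ≤ 2 := by
            by_cases hab' : a = b
            · subst hab'
              have h1 := hcnt1' x a
              omega
            · exact hcnt2' x a b hab'
          have hle2' : (((Finset.range (k' x)).filter
              (fun i => v' x i = a ∧ v' x (i+1) = b)).card : ℝ) +
              (((Finset.range (k' x)).filter
              (fun i => v' x i = b ∧ v' x (i+1) = a)).card : ℝ) ≤ 2 := by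
            exact_mod_cast hle2
          nlinarith [(hπpos x).le]
        · rw [if_neg hw]
          have h1 : ((Finset.range (k' x)).filter
              (fun i => v' x i = a ∧ v' x (i+1) = b)).card = 0 := by
            rw [Finset.card_eq_zero, Finset.filter_eq_empty_iff]
            rintro i hi ⟨e1, e2⟩
            exact hw (hWu x a b i (Finset.mem_range.mp hi) e1 e2)
          have h2 : ((Finset.range (k' x)).filter
              (fun i => v' x i = b ∧ v' x (i+1) = a)).card = 0 := by
            rw [Finset.card_eq_zero, Finset.filter_eq_empty_iff]
            rintro i hi ⟨e1, e2⟩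
            exact hw (walkUses_symm' (hWu x b a i (Finset.mem_range.mp hi) e1 e2))
          rw [h1, h2]
          simp
      calc (∑ x, π x * (((Finset.range (k' x)).filter
              (fun i => v' x i = a ∧ v' x (i+1) = b)).card : ℝ)) +
            (∑ x, π x * (((Finset.range (k' x)).filter
              (fun i => v' x i = b ∧ v' x (i+1) = a)).card : ℝ))
          = ∑ x, (π x * (((Finset.range (k' x)).filter
              (fun i => v' x i = a ∧ v' x (i+1) = b)).card : ℝ) +
              π x * (((Finset.range (k' x)).filter
              (fun i => v' x i = b ∧ v' x (i+1) = a)).card : ℝ)) := by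
            rw [Finset.sum_add_distrib]
        _ ≤ ∑ x, 2 * (if WalkUses (σ x) a b then π x else 0) :=
            Finset.sum_le_sum fun x _ => hper x
        _ = 2 * ∑ x ∈ Finset.univ.filter (fun x => WalkUses (σ x) a b), π x := by
            rw [← Finset.mul_sum, Finset.sum_filter]
        _ ≤ 2 * ((π a * P a b) * η') := by linarith [hmem]
        _ = 2 * η' * (π a * P a b) := by ring
    · have hPab0 : P a b = 0 := le_antisymm (not_lt.mp hab) (hP0 a b)
      have hPba0 : P b a = 0 := by
        have h := (hrev a b).symm
        rw [hPab0, mul_zero] at h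
        exact (mul_eq_zero.mp h).resolve_left (ne_of_gt (hπpos b))
      have h1 : ∀ x, ((Finset.range (k' x)).filter
          (fun i => v' x i = a ∧ v' x (i+1) = b)).card = 0 := by
        intro x
        rw [Finset.card_eq_zero, Finset.filter_eq_empty_iff]
        rintro i hi ⟨e1, e2⟩
        have h := hchain' x i (Finset.mem_range.mp hi)
        rw [e1, e2, hPab0] at h
        exact lt_irrefl 0 h
      have h2 : ∀ x, ((Finset.range (k' x)).filter
          (fun i => v' x i = b ∧ v' x (i+1) = a)).card = 0 := by
        intro x
        rw [Finset.card_eq_zero, Finset.filter_eq_empty_iff]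
        rintro i hi ⟨e1, e2⟩
        have h := hchain' x i (Finset.mem_range.mp hi)
        rw [e1, e2, hPba0] at h
        exact lt_irrefl 0 h
      simp only [h1, h2, hPab0]
      simp
  -- per-state Cauchy-Schwarz bound
  have hkℓ : ∀ x, k x ≤ ℓ := fun x => hℓ.2 ⟨x, rfl⟩
  have hx4 : ∀ x : Ω, 4 * ψ x^2 ≤ (ℓ : ℝ) *
      ∑ i ∈ Finset.range (k' x), (ψ (v' x i) + ψ (v' x (i+1)))^2 := by
    intro x
    have htel : ∑ i ∈ Finset.range (k' x),
        (-1:ℝ)^i * (ψ (v' x i) + ψ (v' x (i+1))) = 2 * ψ x := by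
      rw [telescope_alt' (fun i => ψ (v' x i)) (k' x), Odd.neg_one_pow (hodd' x),
        hclosed' x, h0' x, hv0 x]
      ring
    have hcs := sq_sum_le' (k' x) (fun i => (-1:ℝ)^i * (ψ (v' x i) + ψ (v' x (i+1))))
    rw [htel] at hcs
    have hsq : ∑ i ∈ Finset.range (k' x),
        ((-1:ℝ)^i * (ψ (v' x i) + ψ (v' x (i+1))))^2 =
        ∑ i ∈ Finset.range (k' x), (ψ (v' x i) + ψ (v' x (i+1)))^2 := by
      refine Finset.sum_congr rfl fun i _ => ?_
      rw [mul_pow, ← pow_mul, mul_comm i 2, pow_mul]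
      norm_num
    rw [hsq] at hcs
    have hkk : ((k' x : ℝ)) ≤ (ℓ : ℝ) := by
      exact_mod_cast (hle' x).trans (hkℓ x)
    have hnn : 0 ≤ ∑ i ∈ Finset.range (k' x), (ψ (v' x i) + ψ (v' x (i+1)))^2 := by
      positivity
    nlinarith [hcs]
  -- main summation
  have hsum : 4 * S ≤ (ℓ : ℝ) * ∑ x, π x *
      ∑ i ∈ Finset.range (k' x), (ψ (v' x i) + ψ (v' x (i+1)))^2 := by
    calc 4 * S = ∑ x, π x * (4 * ψ x^2) := by
          rw [hSdef, Finset.mul_sum]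
          exact Finset.sum_congr rfl fun x _ => by ring
      _ ≤ ∑ x, π x * ((ℓ : ℝ) * ∑ i ∈ Finset.range (k' x),
            (ψ (v' x i) + ψ (v' x (i+1)))^2) :=
          Finset.sum_le_sum fun x _ =>
            mul_le_mul_of_nonneg_left (hx4 x) (hπpos x).le
      _ = (ℓ : ℝ) * ∑ x, π x * ∑ i ∈ Finset.range (k' x),
            (ψ (v' x i) + ψ (v' x (i+1)))^2 := by
          rw [Finset.mul_sum]
          exact Finset.sum_congr rfl fun x _ => by ring
  -- rewrite edge sums fiberwise
  have hfib : ∑ x, π x * ∑ i ∈ Finset.range (k' x), (ψ (v' x i) + ψ (v' x (i+1)))^2 =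
      ∑ a, ∑ b, (∑ x, π x * (((Finset.range (k' x)).filter
        (fun i => v' x i = a ∧ v' x (i+1) = b)).card : ℝ)) * (ψ a + ψ b)^2 := by
    calc ∑ x, π x * ∑ i ∈ Finset.range (k' x), (ψ (v' x i) + ψ (v' x (i+1)))^2
        = ∑ x, π x * ∑ a, ∑ b, (((Finset.range (k' x)).filter
            (fun i => v' x i = a ∧ v' x (i+1) = b)).card : ℝ) * (ψ a + ψ b)^2 := by
          refine Finset.sum_congr rfl fun x _ => ?_
          rw [sum_key' (k' x) (v' x) (fun a b => (ψ a + ψ b)^2)]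
      _ = ∑ x, ∑ a, ∑ b, π x * ((((Finset.range (k' x)).filter
            (fun i => v' x i = a ∧ v' x (i+1) = b)).card : ℝ) * (ψ a + ψ b)^2) := by
          refine Finset.sum_congr rfl fun x _ => ?_
          rw [Finset.mul_sum]
          exact Finset.sum_congr rfl fun a _ => by rw [Finset.mul_sum]
      _ = ∑ a, ∑ x, ∑ b, π x * ((((Finset.range (k' x)).filter
            (fun i => v' x i = a ∧ v' x (i+1) = b)).card : ℝ) * (ψ a + ψ b)^2) :=
          Finset.sum_comm
      _ = ∑ a, ∑ b, ∑ x, π x * ((((Finset.range (k' x)).filter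
            (fun i => v' x i = a ∧ v' x (i+1) = b)).card : ℝ) * (ψ a + ψ b)^2) :=
          Finset.sum_congr rfl fun a _ => Finset.sum_comm
      _ = ∑ a, ∑ b, (∑ x, π x * (((Finset.range (k' x)).filter
            (fun i => v' x i = a ∧ v' x (i+1) = b)).card : ℝ)) * (ψ a + ψ b)^2 := by
          refine Finset.sum_congr rfl fun a _ => Finset.sum_congr rfl fun b _ => ?_
          rw [Finset.sum_mul]
          exact Finset.sum_congr rfl fun x _ => by ring
  -- bound the fiberwise sum by η' * E
  have hNE : ∑ a, ∑ b, (∑ x, π x * (((Finset.range (k' x)).filter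
        (fun i => v' x i = a ∧ v' x (i+1) = b)).card : ℝ)) * (ψ a + ψ b)^2 ≤
      η' * ∑ a, ∑ b, π a * P a b * (ψ a + ψ b)^2 := by
    set T := ∑ a, ∑ b, (∑ x, π x * (((Finset.range (k' x)).filter
        (fun i => v' x i = a ∧ v' x (i+1) = b)).card : ℝ)) * (ψ a + ψ b)^2 with hT
    have hswap : T = ∑ a, ∑ b, (∑ x, π x * (((Finset.range (k' x)).filter
        (fun i => v' x i = b ∧ v' x (i+1) = a)).card : ℝ)) * (ψ a + ψ b)^2 := by
      rw [hT, Finset.sum_comm]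
      refine Finset.sum_congr rfl fun a _ => Finset.sum_congr rfl fun b _ => ?_
      rw [show (ψ b + ψ a)^2 = (ψ a + ψ b)^2 by ring]
    have h2T : 2 * T ≤ 2 * (η' * ∑ a, ∑ b, π a * P a b * (ψ a + ψ b)^2) := by
      calc 2 * T = T + T := by ring
        _ = ∑ a, ∑ b, ((∑ x, π x * (((Finset.range (k' x)).filter
              (fun i => v' x i = a ∧ v' x (i+1) = b)).card : ℝ)) +
              (∑ x, π x * (((Finset.range (k' x)).filter
              (fun i => v' x i = b ∧ v' x (i+1) = a)).card : ℝ))) * (ψ a + ψ b)^2 := by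
            nth_rewrite 2 [hswap]
            rw [hT, ← Finset.sum_add_distrib]
            refine Finset.sum_congr rfl fun a _ => ?_
            rw [← Finset.sum_add_distrib]
            exact Finset.sum_congr rfl fun b _ => by ring
        _ ≤ ∑ a, ∑ b, (2 * η' * (π a * P a b)) * (ψ a + ψ b)^2 := by
            refine Finset.sum_le_sum fun a _ => Finset.sum_le_sum fun b _ => ?_
            exact mul_le_mul_of_nonneg_right (hpair a b) (sq_nonneg _)
        _ = 2 * (η' * ∑ a, ∑ b, π a * P a b * (ψ a + ψ b)^2) := by
            have hrow : ∀ a : Ω, ∑ b, (2 * η' * (π a * P a b)) * (ψ a + ψ b)^2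
                = 2 * (η' * ∑ b, π a * P a b * (ψ a + ψ b)^2) := by
              intro a
              rw [Finset.mul_sum, Finset.mul_sum]
              exact Finset.sum_congr rfl fun b _ => by ring
            rw [Finset.sum_congr rfl fun a _ => hrow a, Finset.mul_sum, Finset.mul_sum]
    linarith
  -- combine everything
  have hfinal4 : 4 * S ≤ (ℓ : ℝ) * (η' * ((2 + 2*lam) * S)) := by
    calc 4 * S ≤ (ℓ : ℝ) * ∑ x, π x *
          ∑ i ∈ Finset.range (k' x), (ψ (v' x i) + ψ (v' x (i+1)))^2 := hsum
      _ = (ℓ : ℝ) * ∑ a, ∑ b, (∑ x, π x * (((Finset.range (k' x)).filter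
            (fun i => v' x i = a ∧ v' x (i+1) = b)).card : ℝ)) * (ψ a + ψ b)^2 := by
          rw [hfib]
      _ ≤ (ℓ : ℝ) * (η' * ∑ a, ∑ b, π a * P a b * (ψ a + ψ b)^2) :=
          mul_le_mul_of_nonneg_left hNE (Nat.cast_nonneg ℓ)
      _ = (ℓ : ℝ) * (η' * ((2 + 2*lam) * S)) := by rw [hE]
  have hη0 : 0 ≤ η' := by
    obtain ⟨a, b, hab, heq⟩ := hη'.1
    rw [heq]
    have hQ : 0 < π a * P a b := mul_pos (hπpos a) hab
    have hsnn : 0 ≤ ∑ x ∈ Finset.univ.filter (fun x => WalkUses (σ x) a b), π x :=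
      Finset.sum_nonneg fun x _ => (hπpos x).le
    positivity
  have h4 : (4 : ℝ) ≤ (ℓ : ℝ) * η' * (2 + 2*lam) := by
    have h' : 4 * S ≤ ((ℓ : ℝ) * η' * (2 + 2*lam)) * S := by
      calc 4 * S ≤ (ℓ : ℝ) * (η' * ((2 + 2*lam) * S)) := hfinal4
        _ = ((ℓ : ℝ) * η' * (2 + 2*lam)) * S := by ring
    exact le_of_mul_le_mul_right h' hS
  have hpos : 0 < 1 + lam := by
    by_contra hneg
    push_neg at hneg
    have hln : 0 ≤ (ℓ : ℝ) * η' := mul_nonneg (Nat.cast_nonneg ℓ) hη0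
    nlinarith
  rw [inv_eq_one_div, div_le_div_iff₀ hpos two_pos]
  nlinarith [h4]
end

section
/- Let M be an ergodic time-reversible Markov chain on a finite state space Ω with transition matrix P and stationary distribution π, with second-largest eigenvalue λ_1. For any flow f in the underlying graph of the chain, (1 − λ_1)^{-1} ≤ ρ(f)·ℓ(f), where ρ(f) is the maximum load of f and ℓ(f) is the length of a longest path carrying positive flow. -/
/-- The directed path (given as its list of vertices) `p` traverses the oriented
edge `(a,b)`: `a` is immediately followed by `b` somewhere in `p`. -/
def UsesOrientedEdge {Ω : Type*} (p : List Ω) (a b : Ω) : Prop :=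
  ∃ l₁ l₂, p = l₁ ++ a :: b :: l₂

/-- `p` is a simple directed path from `x` to `y` in the graph with adjacency
relation `adj`: the vertices of `p` are distinct, consecutive vertices are
adjacent, `p` starts at `x`, ends at `y`, and has at least one edge. -/
def IsSimplePathFrom {Ω : Type*} (adj : Ω → Ω → Prop) (p : List Ω) (x y : Ω) : Prop :=
  p.Nodup ∧ p.Chain' adj ∧ p.head? = some x ∧ p.getLast? = some y ∧ 2 ≤ p.length

/-- The total flow `f(e)` routed through the oriented edge `e = (a,b)`. -/
noncomputable def flowEdge {Ω : Type*} (f : List Ω → ℝ) (a b : Ω) : ℝ :=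
  ∑ᶠ p ∈ {p : List Ω | UsesOrientedEdge p a b}, f p

private lemma tele {Ω : Type*} (ψ : Ω → ℝ) :
    ∀ (l : List Ω) (a : Ω),
      (((a :: l).zip l).map (fun e => ψ e.1 - ψ e.2)).sum = ψ a - ψ (l.getLastD a)
  | [], a => by simp
  | b :: m, a => by
    rw [List.zip_cons_cons, List.map_cons, List.sum_cons, tele ψ m b, List.getLastD_cons]
    ring

private lemma chain'_zip {Ω : Type*} {R : Ω → Ω → Prop} :
    ∀ {l : List Ω}, l.Chain' R → ∀ e ∈ l.zip l.tail, R e.1 e.2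
  | [], _, e, he => by simp at he
  | [a], _, e, he => by simp at he
  | a :: b :: m, h, e, he => by
    rw [show List.Chain' R (a :: b :: m) ↔ List.IsChain R (a :: b :: m) from Iff.rfl,
      List.isChain_cons_cons] at h
    rw [show (a :: b :: m).tail = b :: m from rfl, List.zip_cons_cons, List.mem_cons] at he
    rcases he with rfl | he
    · exact h.1
    · exact chain'_zip h.2 e he

private lemma uses_iff_mem_zip {Ω : Type*} {p : List Ω} {a b : Ω} :
    UsesOrientedEdge p a b ↔ (a, b) ∈ p.zip p.tail := by
  constructor
  · rintro ⟨l₁, l₂, rfl⟩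
    induction l₁ with
    | nil => simp [List.zip_cons_cons]
    | cons c l₁ ih =>
      rcases hr : l₁ ++ a :: b :: l₂ with _ | ⟨r, rt⟩
      · simp at hr
      · rw [List.cons_append, hr, show ((c :: r :: rt).tail) = r :: rt from rfl,
          List.zip_cons_cons, List.mem_cons]
        right
        rw [hr] at ih
        exact ih
  · intro h
    induction p with
    | nil => simp at h
    | cons c rest ih =>
      rcases rest with _ | ⟨r, rt⟩
      · simp at h
      · rw [show ((c :: r :: rt).tail) = r :: rt from rfl, List.zip_cons_cons,
          List.mem_cons, Prod.mk.injEq] at h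
        rcases h with ⟨rfl, rfl⟩ | h
        · exact ⟨[], rt, rfl⟩
        · obtain ⟨l₁, l₂, hsplit⟩ := ih h
          exact ⟨c :: l₁, l₂, by rw [List.cons_append, ← hsplit]⟩

private lemma zip_tail_nodup {Ω : Type*} {p : List Ω} (h : p.Nodup) :
    (p.zip p.tail).Nodup := by
  have h2 : ((p.zip p.tail).map Prod.snd).Nodup := by
    rw [List.map_snd_zip (by cases p <;> simp)]
    exact h.tail
  exact h2.of_map _

private lemma zip_tail_length {Ω : Type*} (p : List Ω) :
    (p.zip p.tail).length = p.length - 1 := by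
  rw [List.length_zip, List.length_tail]
  omega

private lemma headI_of_head? {Ω : Type*} [Inhabited Ω] {p : List Ω} {x : Ω}
    (h : p.head? = some x) : p.headI = x := by
  cases p with
  | nil => simp at h
  | cons a l => simpa using h

private lemma getLastI_of_getLast? {Ω : Type*} [Inhabited Ω] {p : List Ω} {y : Ω}
    (h : p.getLast? = some y) : p.getLastI = y := by
  rw [List.getLastI_eq_getLast?, h]
  rfl

private lemma tele' {Ω : Type*} [Inhabited Ω] (ψ : Ω → ℝ) {p : List Ω} (hp : p ≠ []) :
    ((p.zip p.tail).map (fun e => ψ e.1 - ψ e.2)).sum = ψ p.headI - ψ p.getLastI := by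
  rcases p with _ | ⟨a, l⟩
  · exact absurd rfl hp
  rw [show (a :: l).tail = l from rfl, tele ψ l a]
  have h1 : (a :: l).headI = a := rfl
  have h2 : l.getLastD a = (a :: l).getLastI := by
    rw [List.getLastI_eq_getLast?, ← List.getLastD_cons (a := a) (b := a) (l := l), List.getLastD_eq_getLast?]
    cases h : (a :: l).getLast? with
    | none => simp at h
    | some z => rfl
  rw [h1, h2]

/-- Let `M` be an ergodic time-reversible Markov chain on a finite
state space `Ω` with transition matrix `P` and stationary distribution `π`.  For any
flow `f` in the underlying graph of `M`, with maximum load `ρ` and longest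
positive-flow path length `ℓ`, the second-largest eigenvalue `λ₁` (here: any real
eigenvalue `λ ≠ 1`) satisfies `(1 - λ₁)⁻¹ ≤ ρ ℓ`. -/
theorem second_eigenvalue_flow_bound {Ω : Type*} [Fintype Ω] [DecidableEq Ω]
    [Nonempty Ω] (P : Matrix Ω Ω ℝ) (π : Ω → ℝ)
    (hP0 : ∀ x y, 0 ≤ P x y) (hP1 : ∀ x, ∑ y, P x y = 1)
    (hπpos : ∀ x, 0 < π x) (hπsum : ∑ x, π x = 1)
    (hrev : ∀ x y, π x * P x y = π y * P y x)
    (herg : ∃ t : ℕ, ∀ x y, 0 < (P ^ t) x y)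
    (f : List Ω → ℝ)
    (hf0 : ∀ p, 0 ≤ f p)
    (hfsupp : ∀ p, f p ≠ 0 →
      ∃ x y, x ≠ y ∧ IsSimplePathFrom (fun a b => 0 < P a b) p x y)
    (hflow : ∀ x y : Ω, x ≠ y →
      (∑ᶠ p ∈ {p : List Ω | IsSimplePathFrom (fun a b => 0 < P a b) p x y}, f p) =
        π x * π y)
    (ρ : ℝ)
    (hρ : IsGreatest
      {r : ℝ | ∃ a b : Ω, 0 < P a b ∧ r = flowEdge f a b / (π a * P a b)} ρ)
    (ℓ : ℕ)
    (hℓ : IsGreatest {k : ℕ | ∃ p : List Ω, 0 < f p ∧ k = p.length - 1} ℓ)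
    (lam : ℝ)
    (hlam : ∃ ψ : Ω → ℝ, ψ ≠ 0 ∧ P.mulVec ψ = lam • ψ) (hlam1 : lam ≠ 1) :
    (1 - lam)⁻¹ ≤ ρ * (ℓ : ℝ) := by
  classical
  inhabit Ω
  obtain ⟨ψ, hψ0, hψeig⟩ := hlam
  -- pointwise eigenvalue equation
  have heig : ∀ x, ∑ y, P x y * ψ y = lam * ψ x := by
    intro x
    have := congrFun hψeig x
    simpa [Matrix.mulVec, dotProduct] using this
  -- stationarity
  have hstat : ∀ y, ∑ x, π x * P x y = π y := by
    intro y
    calc ∑ x, π x * P x y = ∑ x, π y * P y x := by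
          exact Finset.sum_congr rfl fun x _ => hrev x y
      _ = π y * ∑ x, P y x := by rw [Finset.mul_sum]
      _ = π y := by rw [hP1, mul_one]
  set V : ℝ := ∑ x, π x * ψ x ^ 2 with hV
  -- V > 0
  have hVpos : 0 < V := by
    obtain ⟨x, hx⟩ := Function.ne_iff.mp hψ0
    refine Finset.sum_pos' (fun i _ => mul_nonneg (hπpos i).le (sq_nonneg _)) ⟨x, Finset.mem_univ x, ?_⟩
    have : (0 : ℝ) < ψ x ^ 2 := by
      have hx' : ψ x ≠ 0 := by simpa using hx
      positivity
    exact mul_pos (hπpos x) this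
  -- orthogonality
  have horth : ∑ x, π x * ψ x = 0 := by
    have h1 : lam * ∑ x, π x * ψ x = ∑ x, π x * ψ x := by
      calc lam * ∑ x, π x * ψ x = ∑ x, π x * (lam * ψ x) := by
            rw [Finset.mul_sum]; exact Finset.sum_congr rfl fun x _ => by ring
        _ = ∑ x, π x * ∑ y, P x y * ψ y := by
            exact Finset.sum_congr rfl fun x _ => by rw [heig]
        _ = ∑ x, ∑ y, (π x * P x y) * ψ y := by
            exact Finset.sum_congr rfl fun x _ => by rw [Finset.mul_sum]; exact Finset.sum_congr rfl fun y _ => by ring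
        _ = ∑ y, ∑ x, (π x * P x y) * ψ y := Finset.sum_comm
        _ = ∑ y, π y * ψ y := by
            refine Finset.sum_congr rfl fun y _ => ?_
            rw [← Finset.sum_mul, hstat]
    have h2 : (lam - 1) * ∑ x, π x * ψ x = 0 := by ring_nf; linarith [h1]
    rcases mul_eq_zero.mp h2 with h | h
    · exact absurd (by linarith : lam = 1) hlam1
    · exact h
  -- key eigen identities
  have eA : ∑ x, ∑ y, π x * P x y * ψ x ^ 2 = V := by
    refine Finset.sum_congr rfl fun x _ => ?_
    calc ∑ y, π x * P x y * ψ x ^ 2 = (π x * ψ x ^ 2) * ∑ y, P x y := by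
          rw [Finset.mul_sum]; exact Finset.sum_congr rfl fun y _ => by ring
      _ = π x * ψ x ^ 2 := by rw [hP1, mul_one]
  have eC : ∑ x, ∑ y, π x * P x y * ψ y ^ 2 = V := by
    calc ∑ x, ∑ y, π x * P x y * ψ y ^ 2 = ∑ x, ∑ y, π y * P y x * ψ y ^ 2 := by
          refine Finset.sum_congr rfl fun x _ => Finset.sum_congr rfl fun y _ => by rw [hrev]
      _ = ∑ y, ∑ x, π y * P y x * ψ y ^ 2 := Finset.sum_comm
      _ = V := by
          refine Finset.sum_congr rfl fun y _ => ?_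
          calc ∑ x, π y * P y x * ψ y ^ 2 = (π y * ψ y ^ 2) * ∑ x, P y x := by
                rw [Finset.mul_sum]; exact Finset.sum_congr rfl fun x _ => by ring
            _ = π y * ψ y ^ 2 := by rw [hP1, mul_one]
  have eB : ∑ x, ∑ y, π x * P x y * (ψ x * ψ y) = lam * V := by
    calc ∑ x, ∑ y, π x * P x y * (ψ x * ψ y)
        = ∑ x, (π x * ψ x) * ∑ y, P x y * ψ y := by
          refine Finset.sum_congr rfl fun x _ => ?_
          rw [Finset.mul_sum]; exact Finset.sum_congr rfl fun y _ => by ring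
      _ = ∑ x, (π x * ψ x) * (lam * ψ x) := by
          exact Finset.sum_congr rfl fun x _ => by rw [heig]
      _ = lam * V := by
          rw [hV, Finset.mul_sum]; exact Finset.sum_congr rfl fun x _ => by ring
  have key5 : ∑ x, ∑ y, π x * P x y * (ψ x - ψ y) ^ 2 = 2 * (1 - lam) * V := by
    have expand : ∀ x y : Ω, π x * P x y * (ψ x - ψ y) ^ 2 =
        π x * P x y * ψ x ^ 2 + π x * P x y * ψ y ^ 2 - 2 * (π x * P x y * (ψ x * ψ y)) := by
      intro x y; ring
    calc ∑ x, ∑ y, π x * P x y * (ψ x - ψ y) ^ 2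
        = ∑ x, ((∑ y, π x * P x y * ψ x ^ 2) + (∑ y, π x * P x y * ψ y ^ 2)
            - 2 * ∑ y, π x * P x y * (ψ x * ψ y)) := by
          refine Finset.sum_congr rfl fun x _ => ?_
          rw [← Finset.sum_add_distrib, Finset.mul_sum, ← Finset.sum_sub_distrib]
          exact Finset.sum_congr rfl fun y _ => expand x y
      _ = (∑ x, ∑ y, π x * P x y * ψ x ^ 2) + (∑ x, ∑ y, π x * P x y * ψ y ^ 2)
            - 2 * ∑ x, ∑ y, π x * P x y * (ψ x * ψ y) := by
          rw [← Finset.sum_add_distrib, Finset.mul_sum, ← Finset.sum_sub_distrib]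
      _ = V + V - 2 * (lam * V) := by rw [eA, eB, eC]
      _ = 2 * (1 - lam) * V := by ring
  have key6 : ∑ x, ∑ y, π x * π y * (ψ x - ψ y) ^ 2 = 2 * V := by
    have eA' : ∑ x, ∑ y, π x * π y * ψ x ^ 2 = V := by
      refine Finset.sum_congr rfl fun x _ => ?_
      calc ∑ y, π x * π y * ψ x ^ 2 = (π x * ψ x ^ 2) * ∑ y, π y := by
            rw [Finset.mul_sum]; exact Finset.sum_congr rfl fun y _ => by ring
        _ = π x * ψ x ^ 2 := by rw [hπsum, mul_one]
    have eC' : ∑ x, ∑ y, π x * π y * ψ y ^ 2 = V := by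
      calc ∑ x, ∑ y, π x * π y * ψ y ^ 2 = ∑ y, ∑ x, π x * π y * ψ y ^ 2 := Finset.sum_comm
        _ = V := by
          refine Finset.sum_congr rfl fun y _ => ?_
          calc ∑ x, π x * π y * ψ y ^ 2 = (π y * ψ y ^ 2) * ∑ x, π x := by
                rw [Finset.mul_sum]; exact Finset.sum_congr rfl fun x _ => by ring
            _ = π y * ψ y ^ 2 := by rw [hπsum, mul_one]
    have eB' : ∑ x, ∑ y, π x * π y * (ψ x * ψ y) = 0 := by
      calc ∑ x, ∑ y, π x * π y * (ψ x * ψ y)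
          = ∑ x, (π x * ψ x) * ∑ y, π y * ψ y := by
            refine Finset.sum_congr rfl fun x _ => ?_
            rw [Finset.mul_sum]; exact Finset.sum_congr rfl fun y _ => by ring
        _ = 0 := by rw [horth]; simp
    calc ∑ x, ∑ y, π x * π y * (ψ x - ψ y) ^ 2
        = ∑ x, ((∑ y, π x * π y * ψ x ^ 2) + (∑ y, π x * π y * ψ y ^ 2)
            - 2 * ∑ y, π x * π y * (ψ x * ψ y)) := by
          refine Finset.sum_congr rfl fun x _ => ?_
          rw [← Finset.sum_add_distrib, Finset.mul_sum, ← Finset.sum_sub_distrib]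
          exact Finset.sum_congr rfl fun y _ => by ring
      _ = (∑ x, ∑ y, π x * π y * ψ x ^ 2) + (∑ x, ∑ y, π x * π y * ψ y ^ 2)
            - 2 * ∑ x, ∑ y, π x * π y * (ψ x * ψ y) := by
          rw [← Finset.sum_add_distrib, Finset.mul_sum, ← Finset.sum_sub_distrib]
      _ = V + V - 2 * 0 := by rw [eA', eB', eC']
      _ = 2 * V := by ring
  -- finiteness of the support of f
  have hfin : {p : List Ω | f p ≠ 0}.Finite := by
    apply Set.Finite.subset (List.finite_length_le Ω (Fintype.card Ω))
    intro p hp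
    obtain ⟨x, y, _, hpath⟩ := hfsupp p hp
    exact hpath.1.length_le_card
  set S : Finset (List Ω) := hfin.toFinset with hS
  have hSmem : ∀ p, p ∈ S ↔ f p ≠ 0 := fun p => Set.Finite.mem_toFinset hfin
  -- basic facts for members of S
  have hkey : ∀ p ∈ S, IsSimplePathFrom (fun a b => 0 < P a b) p p.headI p.getLastI
      ∧ p.headI ≠ p.getLastI := by
    intro p hp
    obtain ⟨x, y, hxy, hpath⟩ := hfsupp p ((hSmem p).mp hp)
    rw [headI_of_head? hpath.2.2.1, getLastI_of_getLast? hpath.2.2.2.1]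
    exact ⟨hpath, hxy⟩
  -- flowEdge as a finite sum
  have hFE : ∀ a b : Ω, flowEdge f a b
      = ∑ p ∈ S.filter (fun p => (a, b) ∈ p.zip p.tail), f p := by
    intro a b
    apply finsum_mem_eq_sum_of_inter_support_eq
    ext p
    simp only [Set.mem_inter_iff, Set.mem_setOf_eq, Function.mem_support, Finset.coe_filter,
      hSmem, uses_iff_mem_zip]
    tauto
  -- flow condition as a finite sum
  have hPF : ∀ x y : Ω, x ≠ y → π x * π y
      = ∑ p ∈ S.filter (fun p => IsSimplePathFrom (fun a b => 0 < P a b) p x y), f p := by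
    intro x y hxy
    rw [← hflow x y hxy]
    apply finsum_mem_eq_sum_of_inter_support_eq
    ext p
    simp only [Set.mem_inter_iff, Set.mem_setOf_eq, Function.mem_support, Finset.coe_filter, hSmem]
    tauto
  -- ρ is nonnegative
  have hρ0 : 0 ≤ ρ := by
    obtain ⟨a, b, hab, heq⟩ := hρ.1
    rw [heq, hFE a b]
    exact div_nonneg (Finset.sum_nonneg fun p _ => hf0 p) (mul_pos (hπpos a) hab).le
  -- edge bound
  have key4 : ∀ a b : Ω,
      (∑ p ∈ S.filter (fun p => (a, b) ∈ p.zip p.tail), f p) ≤ ρ * (π a * P a b) := by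
    intro a b
    by_cases hab : 0 < P a b
    · have h1 : flowEdge f a b / (π a * P a b) ≤ ρ := hρ.2 ⟨a, b, hab, rfl⟩
      rw [div_le_iff₀ (mul_pos (hπpos a) hab)] at h1
      rw [← hFE a b]
      linarith [h1]
    · have hab0 : P a b = 0 := le_antisymm (not_lt.mp hab) (hP0 a b)
      have hempty : S.filter (fun p => (a, b) ∈ p.zip p.tail) = ∅ := by
        rw [Finset.filter_eq_empty_iff]
        intro p hp hmem
        exact hab (chain'_zip (hkey p hp).1.2.1 _ hmem)
      rw [hempty, hab0]
      simp
  -- partition the double sum into fibers over (head, last)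
  have key1 : ∑ x, ∑ y, π x * π y * (ψ x - ψ y) ^ 2
      = ∑ p ∈ S, f p * (ψ p.headI - ψ p.getLastI) ^ 2 := by
    rw [← Finset.sum_fiberwise S (fun p => (p.headI, p.getLastI))
      (fun p => f p * (ψ p.headI - ψ p.getLastI) ^ 2), Fintype.sum_prod_type]
    refine Finset.sum_congr rfl fun x _ => Finset.sum_congr rfl fun y _ => ?_
    by_cases hxy : x = y
    · subst hxy
      have hempty : S.filter (fun p => (p.headI, p.getLastI) = (x, x)) = ∅ := by
        rw [Finset.filter_eq_empty_iff]
        intro p hp h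
        rw [Prod.mk.injEq] at h
        exact (hkey p hp).2 (h.1.trans h.2.symm)
      rw [hempty]
      simp
    · have hfilt : S.filter (fun p => (p.headI, p.getLastI) = (x, y))
          = S.filter (fun p => IsSimplePathFrom (fun a b => 0 < P a b) p x y) := by
        refine Finset.filter_congr fun p hp => ?_
        rw [Prod.mk.injEq]
        constructor
        · rintro ⟨h1, h2⟩
          have := (hkey p hp).1
          rw [h1, h2] at this
          simp [this]
        · intro h
          simp only [headI_of_head? h.2.2.1, getLastI_of_getLast? h.2.2.2.1, and_self]
      rw [hfilt]
      have : ∑ p ∈ S.filter (fun p => IsSimplePathFrom (fun a b => 0 < P a b) p x y),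
          f p * (ψ p.headI - ψ p.getLastI) ^ 2
          = ∑ p ∈ S.filter (fun p => IsSimplePathFrom (fun a b => 0 < P a b) p x y),
          f p * (ψ x - ψ y) ^ 2 := by
        refine Finset.sum_congr rfl fun p hp => ?_
        rw [Finset.mem_filter] at hp
        rw [headI_of_head? hp.2.2.2.1, getLastI_of_getLast? hp.2.2.2.2.1]
      rw [this, ← Finset.sum_mul, ← hPF x y hxy]
  -- Cauchy-Schwarz along each path
  have key2 : ∀ p ∈ S, (ψ p.headI - ψ p.getLastI) ^ 2
      ≤ (ℓ : ℝ) * ∑ e ∈ (p.zip p.tail).toFinset, (ψ e.1 - ψ e.2) ^ 2 := by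
    intro p hp
    have hnd : (p.zip p.tail).Nodup := zip_tail_nodup (hkey p hp).1.1
    have hlen : 2 ≤ p.length := (hkey p hp).1.2.2.2.2
    have hne : p ≠ [] := by intro h; rw [h] at hlen; simp at hlen
    have htel : ∑ e ∈ (p.zip p.tail).toFinset, (ψ e.1 - ψ e.2)
        = ψ p.headI - ψ p.getLastI := by
      rw [List.sum_toFinset _ hnd, tele' ψ hne]
    have hcard : (p.zip p.tail).toFinset.card = p.length - 1 := by
      rw [List.toFinset_card_of_nodup hnd, zip_tail_length]
    have hcardle : p.length - 1 ≤ ℓ := by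
      refine hℓ.2 ⟨p, ?_, rfl⟩
      exact lt_of_le_of_ne (hf0 p) (Ne.symm ((hSmem p).mp hp))
    calc (ψ p.headI - ψ p.getLastI) ^ 2
        = (∑ e ∈ (p.zip p.tail).toFinset, (ψ e.1 - ψ e.2)) ^ 2 := by rw [htel]
      _ ≤ (p.zip p.tail).toFinset.card * ∑ e ∈ (p.zip p.tail).toFinset, (ψ e.1 - ψ e.2) ^ 2 :=
          sq_sum_le_card_mul_sum_sq
      _ ≤ (ℓ : ℝ) * ∑ e ∈ (p.zip p.tail).toFinset, (ψ e.1 - ψ e.2) ^ 2 := by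
          apply mul_le_mul_of_nonneg_right _ (Finset.sum_nonneg fun e _ => sq_nonneg _)
          rw [hcard]
          exact_mod_cast hcardle
  -- swap the path-edge double sum
  have key3 : ∑ p ∈ S, f p * ∑ e ∈ (p.zip p.tail).toFinset, (ψ e.1 - ψ e.2) ^ 2
      = ∑ e : Ω × Ω, (∑ p ∈ S.filter (fun p => (e.1, e.2) ∈ p.zip p.tail), f p)
          * (ψ e.1 - ψ e.2) ^ 2 := by
    calc ∑ p ∈ S, f p * ∑ e ∈ (p.zip p.tail).toFinset, (ψ e.1 - ψ e.2) ^ 2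
        = ∑ p ∈ S, ∑ e : Ω × Ω,
            (if e ∈ (p.zip p.tail).toFinset then f p * (ψ e.1 - ψ e.2) ^ 2 else 0) := by
          refine Finset.sum_congr rfl fun p _ => ?_
          rw [Finset.mul_sum, Finset.sum_ite_mem, Finset.univ_inter]
      _ = ∑ e : Ω × Ω, ∑ p ∈ S,
            (if e ∈ (p.zip p.tail).toFinset then f p * (ψ e.1 - ψ e.2) ^ 2 else 0) :=
          Finset.sum_comm
      _ = ∑ e : Ω × Ω, (∑ p ∈ S.filter (fun p => (e.1, e.2) ∈ p.zip p.tail), f p)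
          * (ψ e.1 - ψ e.2) ^ 2 := by
          refine Finset.sum_congr rfl fun e _ => ?_
          rw [Finset.sum_mul, Finset.sum_filter]
          refine Finset.sum_congr rfl fun p _ => ?_
          simp only [List.mem_toFinset, ite_mul, zero_mul]
  -- put everything together
  have main : 2 * V ≤ ρ * (ℓ : ℝ) * (2 * (1 - lam) * V) := by
    calc 2 * V = ∑ p ∈ S, f p * (ψ p.headI - ψ p.getLastI) ^ 2 := by rw [← key6, key1]
      _ ≤ ∑ p ∈ S, f p * ((ℓ : ℝ) * ∑ e ∈ (p.zip p.tail).toFinset, (ψ e.1 - ψ e.2) ^ 2) := by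
          refine Finset.sum_le_sum fun p hp => ?_
          exact mul_le_mul_of_nonneg_left (key2 p hp) (hf0 p)
      _ = (ℓ : ℝ) * ∑ p ∈ S, f p * ∑ e ∈ (p.zip p.tail).toFinset, (ψ e.1 - ψ e.2) ^ 2 := by
          rw [Finset.mul_sum]
          exact Finset.sum_congr rfl fun p _ => by ring
      _ = (ℓ : ℝ) * ∑ e : Ω × Ω, (∑ p ∈ S.filter (fun p => (e.1, e.2) ∈ p.zip p.tail), f p)
          * (ψ e.1 - ψ e.2) ^ 2 := by rw [key3]
      _ ≤ (ℓ : ℝ) * ∑ e : Ω × Ω, ρ * (π e.1 * P e.1 e.2) * (ψ e.1 - ψ e.2) ^ 2 := by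
          apply mul_le_mul_of_nonneg_left _ (Nat.cast_nonneg ℓ)
          refine Finset.sum_le_sum fun e _ => ?_
          exact mul_le_mul_of_nonneg_right (key4 e.1 e.2) (sq_nonneg _)
      _ = ρ * (ℓ : ℝ) * (2 * (1 - lam) * V) := by
          rw [← key5, Fintype.sum_prod_type, Finset.mul_sum, Finset.mul_sum]
          refine Finset.sum_congr rfl fun x _ => ?_
          rw [Finset.mul_sum, Finset.mul_sum]
          exact Finset.sum_congr rfl fun y _ => by ring
  have hineq : 1 ≤ ρ * (ℓ : ℝ) * (1 - lam) := by
    by_contra h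
    push_neg at h
    have h2 : ρ * (ℓ : ℝ) * (2 * (1 - lam) * V) < 2 * V := by nlinarith [hVpos]
    linarith [main]
  have h1lam : 0 < 1 - lam := by
    by_contra h
    push_neg at h
    nlinarith [mul_nonneg (mul_nonneg hρ0 (Nat.cast_nonneg (α := ℝ) ℓ))
      (by linarith : (0:ℝ) ≤ lam - 1), hineq]
  rw [inv_eq_one_div, div_le_iff₀ h1lam]
  linarith
end
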